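/- arXiv:math/0410284 — 3 statements merged into one kernel-verified Lean document; each statement's English description precedes it below -/
import Mathlib

section
/- Let f be a C² functional on a Hilbert space X, c ∈ ℝ, F a connected component of f^c, and 𝓕 its basin of attraction under the normalized steepest descent flow. If x̄ ∈ ∂𝓕 is a minimizer of f restricted to ∂𝓕, then x̄ is a critical point of f. -/
open Filter Topology Metric Set

variable {X : Type*} [NormedAddCommGroup X] [InnerProductSpace ℝ X] [CompleteSpace X]

/-- The normalized steepest descent flow of `f`:
`η(0,x) = x` and `dη/dt = -∇f(η)/(1+‖∇f(η)‖)`. -/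
def IsNSDFlow (f : X → ℝ) (η : ℝ → X → X) : Prop :=
  (∀ x, η 0 x = x) ∧
  ∀ x t, HasDerivAt (fun s => η s x)
    (-((1 + ‖gradient f (η t x)‖)⁻¹ • gradient f (η t x))) t

/-- The ω-limit set of `x` for the flow `η`. -/
def omegaLim (η : ℝ → X → X) (x : X) : Set X :=
  {y | ∃ t : ℕ → ℝ, Tendsto t atTop atTop ∧ Tendsto (fun n => η (t n) x) atTop (𝓝 y)}

/-- `x₀` is a strict local minimizer of `f`. -/
def StrictLocalMin (f : X → ℝ) (x₀ : X) : Prop :=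
  ∃ r₀ > 0, ∀ r : ℝ, 0 < r → r < r₀ → ∃ ε > 0, ∀ y ∈ Metric.sphere x₀ r, f x₀ + ε ≤ f y

/-- The loop `γ : [0,1] → X` is contractible within the set `S`. -/
def LoopContractibleIn (S : Set X) (γ : ℝ → X) : Prop :=
  ∃ (h : ℝ → ℝ → X) (x₀ : X),
    ContinuousOn (fun p : ℝ × ℝ => h p.1 p.2) (Icc 0 1 ×ˢ Icc 0 1) ∧
    (∀ l ∈ Icc (0:ℝ) 1, ∀ s ∈ Icc (0:ℝ) 1, h l s ∈ S) ∧
    (∀ s ∈ Icc (0:ℝ) 1, h 0 s = γ s) ∧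
    (∀ s ∈ Icc (0:ℝ) 1, h 1 s = x₀) ∧
    ∀ l ∈ Icc (0:ℝ) 1, h l 0 = h l 1

/-- A subset `S` is simply connected: every loop in `S` is contractible in `S`. -/
def SimplyConnIn (S : Set X) : Prop :=
  ∀ γ : ℝ → X, ContinuousOn γ (Icc 0 1) → (∀ s ∈ Icc (0:ℝ) 1, γ s ∈ S) →
    γ 0 = γ 1 → LoopContractibleIn S γ

section Aux

set_option linter.unusedSectionVars false

/-- The normalizing map `u ↦ -u/(1+‖u‖)` is globally `2`-Lipschitz. -/
lemma nsd_lip : LipschitzWith 2 (fun u : X => -((1 + ‖u‖)⁻¹ • u)) := by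
  apply LipschitzWith.of_dist_le_mul
  intro u w
  rw [dist_eq_norm, dist_eq_norm, ← neg_sub, norm_neg, neg_sub_neg]
  have h1u : (0:ℝ) < 1 + ‖u‖ := by positivity
  have h1w : (0:ℝ) < 1 + ‖w‖ := by positivity
  have key : (1 + ‖u‖)⁻¹ • u - (1 + ‖w‖)⁻¹ • w
      = (1 + ‖u‖)⁻¹ • (u - w) + ((1 + ‖u‖)⁻¹ - (1 + ‖w‖)⁻¹) • w := by
    rw [smul_sub, sub_smul]; abel
  rw [key]
  have h2 : ‖(1 + ‖u‖)⁻¹ • (u - w)‖ ≤ ‖u - w‖ := by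
    rw [norm_smul]
    have : ‖(1 + ‖u‖)⁻¹‖ ≤ 1 := by
      rw [Real.norm_eq_abs, abs_of_pos (inv_pos.mpr h1u)]
      exact inv_le_one_of_one_le₀ (by linarith [norm_nonneg u])
    nlinarith [norm_nonneg (u - w)]
  have h3 : ‖((1 + ‖u‖)⁻¹ - (1 + ‖w‖)⁻¹) • w‖ ≤ ‖u - w‖ := by
    rw [norm_smul, Real.norm_eq_abs]
    have he : (1 + ‖u‖)⁻¹ - (1 + ‖w‖)⁻¹ = (‖w‖ - ‖u‖) / ((1 + ‖u‖) * (1 + ‖w‖)) := by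
      field_simp; ring
    have hpos : (0:ℝ) < (1 + ‖u‖) * (1 + ‖w‖) := by positivity
    rw [he, abs_div, abs_of_pos hpos, div_mul_eq_mul_div, div_le_iff₀ hpos]
    have habs : |‖w‖ - ‖u‖| ≤ ‖u - w‖ := by
      rw [abs_sub_comm]; exact abs_norm_sub_norm_le u w
    have h4 := mul_le_mul_of_nonneg_right habs (norm_nonneg w)
    have h5 : ‖w‖ ≤ (1 + ‖u‖) * (1 + ‖w‖) := by nlinarith [norm_nonneg u, norm_nonneg w]
    have h6 := mul_le_mul_of_nonneg_left h5 (norm_nonneg (u - w))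
    linarith
  calc ‖(1 + ‖u‖)⁻¹ • (u - w) + ((1 + ‖u‖)⁻¹ - (1 + ‖w‖)⁻¹) • w‖
      ≤ ‖(1 + ‖u‖)⁻¹ • (u - w)‖ + ‖((1 + ‖u‖)⁻¹ - (1 + ‖w‖)⁻¹) • w‖ := norm_add_le _ _
    _ ≤ ‖u - w‖ + ‖u - w‖ := add_le_add h2 h3
    _ = 2 * ‖u - w‖ := by ring

lemma nsd_norm_le (u : X) : ‖-((1 + ‖u‖)⁻¹ • u)‖ ≤ 1 := by
  rw [norm_neg, norm_smul, Real.norm_eq_abs, abs_of_pos (by positivity)]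
  rw [inv_mul_le_iff₀ (by positivity)]
  nlinarith [norm_nonneg u]

lemma grad_contdiff (f : X → ℝ) (hf : ContDiff ℝ 2 f) : ContDiff ℝ 1 (gradient f) := by
  have h1 : ContDiff ℝ 1 (fderiv ℝ f) := hf.fderiv_right (by norm_num)
  have h2 : gradient f = fun x => (InnerProductSpace.toDual ℝ X).symm (fderiv ℝ f x) := rfl
  rw [h2]
  exact (InnerProductSpace.toDual ℝ X).symm.contDiff.comp h1

variable (f : X → ℝ)

/-- The vector field of the normalized steepest descent flow. -/
noncomputable def nsdV (y : X) : X := -((1 + ‖gradient f y‖)⁻¹ • gradient f y)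

lemma nsdV_loc_lip (hf : ContDiff ℝ 2 f) (y : X) :
    ∃ (K : NNReal) (ε : ℝ), 0 < ε ∧ LipschitzOnWith K (nsdV f) (closedBall y ε) := by
  obtain ⟨K, t, ht, hK⟩ := ((grad_contdiff f hf).contDiffAt (x := y)).exists_lipschitzOnWith
  obtain ⟨ε, hε, hsub⟩ := Metric.mem_nhds_iff.mp ht
  refine ⟨2 * K, ε / 2, by linarith, ?_⟩
  have : nsdV f = (fun u : X => -((1 + ‖u‖)⁻¹ • u)) ∘ gradient f := rfl
  rw [this]
  exact (nsd_lip.comp_lipschitzOnWith (hK.mono (fun z hz => hsub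
    (lt_of_le_of_lt (mem_closedBall.mp hz) (by linarith)))))

lemma nsdV_flow_deriv {η : ℝ → X → X} (hη : IsNSDFlow f η) (x : X) (t : ℝ) :
    HasDerivAt (fun s => η s x) (nsdV f (η t x)) t := hη.2 x t

lemma flow_speed {η : ℝ → X → X} (hη : IsNSDFlow f η) (x : X) {t : ℝ} (ht : 0 ≤ t) :
    dist (η t x) x ≤ t := by
  have h := (convex_Icc (0:ℝ) t).norm_image_sub_le_of_norm_hasDerivWithin_le
    (f := fun s => η s x) (f' := fun s => nsdV f (η s x)) (C := 1)
    (fun s _ => (nsdV_flow_deriv f hη x s).hasDerivWithinAt)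
    (fun s _ => nsd_norm_le _) ⟨le_refl 0, ht⟩ ⟨ht, le_refl t⟩
  rw [hη.1, one_mul] at h
  calc dist (η t x) x = ‖η t x - x‖ := dist_eq_norm _ _
    _ ≤ ‖t - 0‖ := h
    _ = t := by rw [sub_zero, Real.norm_eq_abs, abs_of_nonneg ht]

lemma nsdV_uniq (hf : ContDiff ℝ 2 f) {c₁ c₂ : ℝ → X}
    (h₁ : ∀ t, HasDerivAt c₁ (nsdV f (c₁ t)) t)
    (h₂ : ∀ t, HasDerivAt c₂ (nsdV f (c₂ t)) t)
    (h0 : c₁ 0 = c₂ 0) : ∀ t, c₁ t = c₂ t := by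
  have hS : {t : ℝ | c₁ t = c₂ t} = univ := by
    apply IsClopen.eq_univ
    · constructor
      · exact isClosed_eq (continuous_iff_continuousAt.mpr fun t => (h₁ t).continuousAt)
          (continuous_iff_continuousAt.mpr fun t => (h₂ t).continuousAt)
      · rw [isOpen_iff_mem_nhds]
        intro t₁ ht₁
        obtain ⟨K, ε, hε, hK⟩ := nsdV_loc_lip f hf (c₁ t₁)
        have hball : closedBall (c₁ t₁) ε ∈ 𝓝 (c₁ t₁) := closedBall_mem_nhds _ hε
        have e₁ : ∀ᶠ t in 𝓝 t₁, c₁ t ∈ closedBall (c₁ t₁) ε :=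
          (h₁ t₁).continuousAt.preimage_mem_nhds hball
        have e₂ : ∀ᶠ t in 𝓝 t₁, c₂ t ∈ closedBall (c₁ t₁) ε := by
          have : c₂ t₁ = c₁ t₁ := (ht₁ : c₁ t₁ = c₂ t₁).symm
          exact (h₂ t₁).continuousAt.preimage_mem_nhds (this ▸ hball)
        exact ODE_solution_unique_of_eventually (v := fun _ x => nsdV f x)
          (s := fun _ => closedBall (c₁ t₁) ε) (Filter.Eventually.of_forall fun _ => hK)
          (e₁.mono fun t ht => ⟨h₁ t, ht⟩) (e₂.mono fun t ht => ⟨h₂ t, ht⟩) ht₁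
    · exact ⟨0, h0⟩
  intro t
  have : t ∈ {t : ℝ | c₁ t = c₂ t} := hS ▸ mem_univ t
  exact this

lemma flow_semigroup (hf : ContDiff ℝ 2 f) {η : ℝ → X → X} (hη : IsNSDFlow f η)
    (z : X) (T t : ℝ) : η (T + t) z = η t (η T z) := by
  have h₁ : ∀ t, HasDerivAt (fun s => η (T + s) z) (nsdV f (η (T + t) z)) t := by
    intro t
    have := HasDerivAt.scomp t (nsdV_flow_deriv f hη z (T + t)) ((hasDerivAt_id t).const_add T)
    simpa [Function.comp_def] using this
  have h₂ := nsdV_flow_deriv f hη (η T z)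
  have h0 : η (T + 0) z = η 0 (η T z) := by rw [add_zero, hη.1]
  exact nsdV_uniq f hf h₁ h₂ h0 t

lemma omega_shift (hf : ContDiff ℝ 2 f) {η : ℝ → X → X} (hη : IsNSDFlow f η)
    (z : X) (T : ℝ) : omegaLim η (η T z) = omegaLim η z := by
  ext y
  constructor
  · rintro ⟨t, ht, hc⟩
    refine ⟨fun n => T + t n, tendsto_atTop_add_const_left _ T ht, ?_⟩
    have : ∀ n, η (T + t n) z = η (t n) (η T z) := fun n => flow_semigroup f hf hη z T (t n)
    simpa [this] using hc
  · rintro ⟨t, ht, hc⟩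
    refine ⟨fun n => t n - T, tendsto_atTop_add_const_right _ (-T) ht, ?_⟩
    have : ∀ n, η (t n - T) (η T z) = η (t n) z := by
      intro n
      rw [← flow_semigroup f hf hη z T (t n - T), add_sub_cancel]
    simpa [this] using hc

end Aux

theorem stmt7 (f : X → ℝ) (hf : ContDiff ℝ 2 f) (η : ℝ → X → X)
    (hη : IsNSDFlow f η) (c : ℝ) (x₀ : X) (hx₀ : f x₀ < c)
    (F : Set X) (hF : F = connectedComponentIn {x : X | f x < c} x₀)
    (xbar : X) (hxbar : xbar ∈ frontier {x : X | omegaLim η x ⊆ F})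
    (hmin : ∀ y ∈ frontier {x : X | omegaLim η x ⊆ F}, f xbar ≤ f y) :
    gradient f xbar = 0 := by
  by_contra hg
  obtain ⟨K, ε, hε, hK⟩ := nsdV_loc_lip f hf xbar
  -- the derivative of t ↦ f (η t xbar) at 0 is negative
  have hxb : η 0 xbar = xbar := hη.1 xbar
  have hfd : HasFDerivAt f (fderiv ℝ f xbar) (η 0 xbar) := by
    rw [hxb]
    exact (hf.differentiable (by norm_num)).differentiableAt.hasFDerivAt
  have hd0 : HasDerivAt (fun s => η s xbar) (nsdV f (η 0 xbar)) 0 := nsdV_flow_deriv f hη xbar 0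
  have hφ : HasDerivAt (fun t => f (η t xbar)) (fderiv ℝ f xbar (nsdV f (η 0 xbar))) 0 :=
    hfd.comp_hasDerivAt 0 hd0
  rw [hxb] at hφ
  have hDval : fderiv ℝ f xbar (nsdV f xbar) =
      -((1 + ‖gradient f xbar‖)⁻¹ * ‖gradient f xbar‖ ^ 2) := by
    have h1 : InnerProductSpace.toDual ℝ X (gradient f xbar) = fderiv ℝ f xbar :=
      (InnerProductSpace.toDual ℝ X).apply_symm_apply _
    rw [← h1, InnerProductSpace.toDual_apply_apply]
    rw [show nsdV f xbar = -((1 + ‖gradient f xbar‖)⁻¹ • gradient f xbar) from rfl]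
    rw [inner_neg_right, real_inner_smul_right, real_inner_self_eq_norm_sq]
  have hD0 : fderiv ℝ f xbar (nsdV f xbar) < 0 := by
    rw [hDval]
    have hgn : 0 < ‖gradient f xbar‖ := norm_pos_iff.mpr hg
    have : (0:ℝ) < (1 + ‖gradient f xbar‖)⁻¹ * ‖gradient f xbar‖ ^ 2 := by positivity
    linarith
  -- pick a small positive time T at which f has strictly decreased
  have hsl := hasDerivAt_iff_tendsto_slope.mp hφ
  have hev : ∀ᶠ t in 𝓝[>] (0:ℝ), slope (fun t => f (η t xbar)) 0 t < 0 :=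
    (hsl.mono_left (nhdsWithin_mono 0 fun t (ht : t ∈ Ioi (0:ℝ)) =>
      mem_compl_singleton_iff.mpr (ne_of_gt ht))).eventually_lt_const hD0
  have hIoo : Ioo (0:ℝ) (ε/2) ∈ 𝓝[>] (0:ℝ) :=
    Ioo_mem_nhdsGT (by linarith)
  obtain ⟨T, hT1, hT2⟩ := (hev.and (eventually_of_mem hIoo fun t ht => ht)).exists
  obtain ⟨hT0, hTε⟩ := hT2
  have hφT : f (η T xbar) < f xbar := by
    rw [slope_def_field] at hT1
    rw [hxb] at hT1
    rcases div_neg_iff.mp hT1 with ⟨h1, h2⟩ | ⟨h1, h2⟩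
    · linarith
    · linarith
  -- the flow for time T maps the closure of any invariant set near xbar into itself
  have hclosure : ∀ S : Set X, (∀ z, z ∈ S → η T z ∈ S) →
      xbar ∈ closure S → η T xbar ∈ closure S := by
    intro S hS hcl
    rw [Metric.mem_closure_iff]
    intro ρ hρ
    have hexp : (0:ℝ) < Real.exp (K * T) := Real.exp_pos _
    obtain ⟨z, hzS, hz⟩ := Metric.mem_closure_iff.mp hcl
      (min (ε/2) (ρ / (2 * Real.exp (K * T)))) (by positivity)
    refine ⟨η T z, hS z hzS, ?_⟩
    have hzε : dist xbar z < ε/2 := lt_of_lt_of_le hz (min_le_left _ _)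
    have hmem1 : ∀ t ∈ Ico (0:ℝ) T, η t xbar ∈ closedBall xbar ε := by
      intro t ht
      rw [mem_closedBall]
      have := flow_speed f hη xbar ht.1
      have : dist (η t xbar) xbar ≤ t := this
      linarith [ht.2]
    have hmem2 : ∀ t ∈ Ico (0:ℝ) T, η t z ∈ closedBall xbar ε := by
      intro t ht
      rw [mem_closedBall]
      have h1 := flow_speed f hη z ht.1
      calc dist (η t z) xbar ≤ dist (η t z) z + dist z xbar := dist_triangle _ _ _
        _ ≤ t + dist z xbar := by linarith
        _ ≤ ε := by rw [dist_comm] at hzε; linarith [ht.2]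
    have hgron := dist_le_of_trajectories_ODE_of_mem
      (v := fun _ x => nsdV f x) (s := fun _ => closedBall xbar ε) (K := K)
      (fun _ _ => hK)
      (f := fun t => η t xbar) (g := fun t => η t z) (a := 0) (b := T)
      (δ := dist xbar z)
      (fun t _ => (nsdV_flow_deriv f hη xbar t).continuousAt.continuousWithinAt)
      (fun t _ => (nsdV_flow_deriv f hη xbar t).hasDerivWithinAt)
      hmem1
      (fun t _ => (nsdV_flow_deriv f hη z t).continuousAt.continuousWithinAt)
      (fun t _ => (nsdV_flow_deriv f hη z t).hasDerivWithinAt)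
      hmem2
      (by show dist (η 0 xbar) (η 0 z) ≤ dist xbar z
          rw [hη.1, hη.1])
      T ⟨le_of_lt hT0, le_refl T⟩
    have hfin : dist xbar z * Real.exp (K * (T - 0)) < ρ := by
      rw [sub_zero]
      have h1 : dist xbar z < ρ / (2 * Real.exp (K * T)) :=
        lt_of_lt_of_le hz (min_le_right _ _)
      calc dist xbar z * Real.exp (K * T)
          < ρ / (2 * Real.exp (K * T)) * Real.exp (K * T) :=
            mul_lt_mul_of_pos_right h1 hexp
        _ = ρ / 2 := by field_simp
        _ < ρ := by linarith
    exact lt_of_le_of_lt hgron hfin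
  -- hence η T xbar is still on the frontier of the basin
  have hfront : η T xbar ∈ frontier {x : X | omegaLim η x ⊆ F} := by
    rw [frontier_eq_closure_inter_closure] at hxbar ⊢
    refine ⟨hclosure _ ?_ hxbar.1, hclosure _ ?_ hxbar.2⟩
    · intro z hz
      have : omegaLim η (η T z) = omegaLim η z := omega_shift f hf hη z T
      simpa only [mem_setOf_eq, this] using hz
    · intro z hz
      have heq : omegaLim η (η T z) = omegaLim η z := omega_shift f hf hη z T
      simp only [mem_compl_iff, mem_setOf_eq, heq] at hz ⊢
      exact hz
  have := hmin (η T xbar) hfront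
  linarith
end

section
/- Let f be a C² functional on a Hilbert space X and η its normalized steepest descent flow. Let x̄ be a strict local minimizer of f lying in a connected component (still denoted f^c) of a sublevel set, let ε > 0 and let F be the connected component of {x : f(x) < f(x̄) + ε} containing x̄, assumed contained in a ball B_r(x̄) which is contractible in f^c. For x₁ with ω_{x₁} = {x̄}, define T_{x₁} := inf{t ≥ 0 : η(t,x₁) ∈ F}, the descent path γ¹(λ) = η(T_{x₁}λ, x₁), the segment γ²(λ) = (1-λ)η(T_{x₁},x₁) + λx̄, and the descending path α_{x₁} = γ¹ ∘ γ² (juxtaposition). Then α_{x₁} is a continuous path in f^c from x₁ to x̄, and the maps x₁ ↦ T_{x₁} and x₁ ↦ α_{x₁} (into C([0,1],X) with the uniform topology) are continuous on X̄ := {x : ω_x = {x̄}}. -/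
open Filter Topology Metric Set
open NNReal

variable {X : Type*} [NormedAddCommGroup X] [InnerProductSpace ℝ X] [CompleteSpace X]

set_option linter.unusedSectionVars false
set_option linter.unusedVariables false

theorem my_phi_lip : LipschitzWith 2 (fun v : X => -((1 + ‖v‖)⁻¹ • v)) := by
  apply LipschitzWith.of_dist_le_mul
  intro u v
  have ha : (0:ℝ) < 1 + ‖u‖ := by positivity
  have hb : (0:ℝ) < 1 + ‖v‖ := by positivity
  have hd : dist (-((1 + ‖u‖)⁻¹ • u)) (-((1 + ‖v‖)⁻¹ • v)) = ‖(1 + ‖u‖)⁻¹ • u - (1 + ‖v‖)⁻¹ • v‖ := by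
    rw [dist_eq_norm]
    rw [show -((1 + ‖u‖)⁻¹ • u) - -((1 + ‖v‖)⁻¹ • v) = -((1 + ‖u‖)⁻¹ • u - (1 + ‖v‖)⁻¹ • v) by abel]
    rw [norm_neg]
  rw [hd, dist_eq_norm]
  have hsplit : (1 + ‖u‖)⁻¹ • u - (1 + ‖v‖)⁻¹ • v
      = (1 + ‖u‖)⁻¹ • (u - v) + ((1 + ‖u‖)⁻¹ - (1 + ‖v‖)⁻¹) • v := by
    rw [smul_sub, sub_smul]; abel
  rw [hsplit]
  have h1 : ‖(1 + ‖u‖)⁻¹ • (u - v) + ((1 + ‖u‖)⁻¹ - (1 + ‖v‖)⁻¹) • v‖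
      ≤ (1 + ‖u‖)⁻¹ * ‖u - v‖ + |(1 + ‖u‖)⁻¹ - (1 + ‖v‖)⁻¹| * ‖v‖ := by
    refine (norm_add_le _ _).trans_eq ?_
    rw [norm_smul, norm_smul, Real.norm_eq_abs, Real.norm_eq_abs, abs_of_pos (inv_pos.2 ha)]
  have h2 : |(1 + ‖u‖)⁻¹ - (1 + ‖v‖)⁻¹| ≤ ‖u - v‖ * ((1 + ‖u‖)⁻¹ * (1 + ‖v‖)⁻¹) := by
    have he : (1 + ‖u‖)⁻¹ - (1 + ‖v‖)⁻¹ = ((1 + ‖v‖) - (1 + ‖u‖)) * ((1 + ‖u‖)⁻¹ * (1 + ‖v‖)⁻¹) := by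
      field_simp
    rw [he, abs_mul, abs_of_pos (by positivity : (0:ℝ) < (1 + ‖u‖)⁻¹ * (1 + ‖v‖)⁻¹)]
    gcongr
    rw [show (1 + ‖v‖) - (1 + ‖u‖) = ‖v‖ - ‖u‖ by ring]
    calc |‖v‖ - ‖u‖| ≤ ‖v - u‖ := abs_norm_sub_norm_le v u
      _ = ‖u - v‖ := norm_sub_rev v u
  have hinv : (1 + ‖u‖)⁻¹ ≤ 1 := by
    rw [inv_le_one_iff₀]; right; have := norm_nonneg u; linarith
  have hvb : (1 + ‖v‖)⁻¹ * ‖v‖ ≤ 1 := by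
    rw [inv_mul_le_iff₀ hb]; linarith
  have h3 : |(1 + ‖u‖)⁻¹ - (1 + ‖v‖)⁻¹| * ‖v‖ ≤ ‖u - v‖ := by
    calc |(1 + ‖u‖)⁻¹ - (1 + ‖v‖)⁻¹| * ‖v‖
        ≤ (‖u - v‖ * ((1 + ‖u‖)⁻¹ * (1 + ‖v‖)⁻¹)) * ‖v‖ := by gcongr
      _ = ‖u - v‖ * ((1 + ‖u‖)⁻¹ * ((1 + ‖v‖)⁻¹ * ‖v‖)) := by ring
      _ ≤ ‖u - v‖ * (1 * 1) := by
          gcongr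
      _ = ‖u - v‖ := by ring
  have h4 : (1 + ‖u‖)⁻¹ * ‖u - v‖ ≤ 1 * ‖u - v‖ := by gcongr
  calc ‖(1 + ‖u‖)⁻¹ • (u - v) + ((1 + ‖u‖)⁻¹ - (1 + ‖v‖)⁻¹) • v‖
      ≤ (1 + ‖u‖)⁻¹ * ‖u - v‖ + |(1 + ‖u‖)⁻¹ - (1 + ‖v‖)⁻¹| * ‖v‖ := h1
    _ ≤ 1 * ‖u - v‖ + ‖u - v‖ := by linarith
    _ = 2 * ‖u - v‖ := by ring

theorem my_lip_weaken {K K' : ℝ≥0} {g : X → X} {s : Set X} (h : LipschitzOnWith K g s)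
    (hK : K ≤ K') : LipschitzOnWith K' g s := fun x hx y hy =>
  le_trans (h hx hy) (mul_le_mul_of_nonneg_right (ENNReal.coe_le_coe.2 hK) (by positivity))

theorem my_tube {V : X → X} (hV : LocallyLipschitz V) {C : Set X} (hC : IsCompact C) :
    ∃ δ > 0, ∃ K : ℝ≥0, ∀ y ∈ C, LipschitzOnWith K V (ball y δ) := by
  choose K t ht hl using hV
  have hball : ∀ x : X, ∃ ε > 0, ball x ε ⊆ t x := fun x => Metric.mem_nhds_iff.1 (ht x)
  choose ε hε hsub using hball
  rcases eq_empty_or_nonempty C with hne | hne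
  · exact ⟨1, one_pos, 1, by simp [hne]⟩
  have hcover : C ⊆ ⋃ x ∈ C, ball x (ε x / 2) := fun y hy =>
    mem_biUnion hy (mem_ball_self (by have := hε y; positivity))
  obtain ⟨s, hsC, hsfin, hscover⟩ := hC.elim_finite_subcover_image (fun x _ => isOpen_ball) hcover
  have hsne : s.Nonempty := by
    obtain ⟨y, hy⟩ := hne
    rcases mem_iUnion₂.1 (hscover hy) with ⟨x, hx, _⟩
    exact ⟨x, hx⟩
  set Fs := hsfin.toFinset with hFs
  have hFne : Fs.Nonempty := by
    rw [hFs, Set.Finite.toFinset_nonempty]; exact hsne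
  refine ⟨Fs.inf' hFne (fun x => ε x / 2), ?_, Fs.sup' hFne K, ?_⟩
  · rw [gt_iff_lt, Finset.lt_inf'_iff]
    intro x _
    have := hε x; positivity
  · intro y hy
    rcases mem_iUnion₂.1 (hscover hy) with ⟨x, hx, hyx⟩
    have hxF : x ∈ Fs := by rw [hFs, Set.Finite.mem_toFinset]; exact hx
    have hsubset : ball y (Fs.inf' hFne (fun x => ε x / 2)) ⊆ ball x (ε x) := by
      intro z hz
      have h1 : dist z y < ε x / 2 :=
        lt_of_lt_of_le hz (Finset.inf'_le _ hxF)
      have h2 : dist y x < ε x / 2 := hyx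
      calc dist z x ≤ dist z y + dist y x := dist_triangle _ _ _
        _ < ε x / 2 + ε x / 2 := add_lt_add h1 h2
        _ = ε x := by ring
    exact my_lip_weaken (((hl x).mono (hsub x)).mono hsubset) (Finset.le_sup' K hxF)

theorem my_contDep {V : X → X} (hV : LocallyLipschitz V) {F : ℝ → X}
    (hF : ∀ t, HasDerivAt F (V (F t)) t) (a b : ℝ) {δ : ℝ} (hδ : 0 < δ) :
    ∃ ρ > 0, ∀ G : ℝ → X, (∀ t, HasDerivAt G (V (G t)) t) →
      dist (F a) (G a) < ρ → ∀ t ∈ Icc a b, dist (F t) (G t) < δ := by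
  rcases le_or_gt a b with hab | hab
  swap
  · exact ⟨1, one_pos, fun G _ _ t ht => absurd (ht.1.trans ht.2) (not_le.2 hab)⟩
  have hFc : Continuous F := continuous_iff_continuousAt.2 fun t => (hF t).continuousAt
  have hC : IsCompact (F '' Icc a b) := isCompact_Icc.image hFc
  obtain ⟨δ₀, hδ₀, K, hK⟩ := my_tube hV hC
  set m := min δ δ₀ with hm
  have hm0 : 0 < m := lt_min hδ hδ₀
  set ρ := m / 2 * Real.exp (-(K * (b - a))) with hρdef
  have hρ0 : 0 < ρ := by positivity
  have hρm : ρ ≤ m / 2 := by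
    rw [hρdef]
    calc m / 2 * Real.exp (-(K * (b - a))) ≤ m / 2 * Real.exp 0 := by
          gcongr
          exact neg_nonpos.2 (mul_nonneg K.coe_nonneg (by linarith))
      _ = m / 2 := by rw [Real.exp_zero, mul_one]
  refine ⟨ρ, hρ0, fun G hG hinit => ?_⟩
  have hGc : Continuous G := continuous_iff_continuousAt.2 fun t => (hG t).continuousAt
  set clamp : ℝ → ℝ := fun u => min (max u a) b with hclamp
  have hclampmem : ∀ u, F (clamp u) ∈ F '' Icc a b := fun u =>
    mem_image_of_mem _ ⟨le_min (le_max_right u a) hab, min_le_right _ _⟩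
  have hclampeq : ∀ u ∈ Icc a b, clamp u = u := by
    intro u hu
    rw [hclamp]
    simp only [max_eq_left hu.1, min_eq_left hu.2]
  -- key Gronwall step
  have key : ∀ τ ∈ Icc a b, (∀ u ∈ Icc a τ, dist (F u) (G u) ≤ m / 2) →
      ∀ u ∈ Icc a τ, dist (F u) (G u) < m / 2 := by
    intro τ hτ hsmall u hu
    have hgr := dist_le_of_trajectories_ODE_of_mem
      (v := fun _ y => V y) (s := fun u => ball (F (clamp u)) δ₀) (K := K)
      (fun u _ => hK _ (hclampmem u))
      hFc.continuousOn (fun w _ => (hF w).hasDerivWithinAt)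
      (fun w hw => by
        show F w ∈ ball (F (clamp w)) δ₀
        rw [hclampeq w ⟨hw.1, hw.2.le.trans hτ.2⟩]
        exact mem_ball_self hδ₀)
      hGc.continuousOn (fun w _ => (hG w).hasDerivWithinAt)
      (fun w hw => by
        show G w ∈ ball (F (clamp w)) δ₀
        rw [hclampeq w ⟨hw.1, hw.2.le.trans hτ.2⟩]
        rw [mem_ball, dist_comm]
        exact lt_of_le_of_lt (hsmall w ⟨hw.1, hw.2.le⟩)
          (lt_of_lt_of_le (half_lt_self hm0) (min_le_right _ _)))
      (le_refl (dist (F a) (G a))) u hu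
    calc dist (F u) (G u) ≤ dist (F a) (G a) * Real.exp (K * (u - a)) := hgr
      _ < ρ * Real.exp (K * (u - a)) := by
          exact mul_lt_mul_of_pos_right hinit (Real.exp_pos _)
      _ ≤ ρ * Real.exp (K * (b - a)) := by
          gcongr
          exact hu.2.trans hτ.2
      _ = m / 2 := by
          rw [hρdef, mul_assoc, ← Real.exp_add, neg_add_cancel, Real.exp_zero, mul_one]
  -- bootstrap via sSup
  set Q : Set ℝ := {τ | τ ∈ Icc a b ∧ ∀ u ∈ Icc a τ, dist (F u) (G u) ≤ m / 2} with hQdef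
  have haQ : a ∈ Q := by
    refine ⟨⟨le_rfl, hab⟩, fun u hu => ?_⟩
    have : u = a := le_antisymm hu.2 hu.1
    rw [this]
    exact (hinit.trans_le hρm).le
  have hQbdd : BddAbove Q := ⟨b, fun τ hτ => hτ.1.2⟩
  have hQne : Q.Nonempty := ⟨a, haQ⟩
  set τs := sSup Q with hτs
  have haτ : a ≤ τs := le_csSup hQbdd haQ
  have hτb : τs ≤ b := csSup_le hQne fun τ hτ => hτ.1.2
  have hdc : Continuous (fun u => dist (F u) (G u)) := hFc.dist hGc
  have hτQ : τs ∈ Q := by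
    refine ⟨⟨haτ, hτb⟩, fun u hu => ?_⟩
    rcases lt_or_eq_of_le hu.2 with hlt | heq
    · obtain ⟨τ', hτ'Q, huτ'⟩ := exists_lt_of_lt_csSup hQne hlt
      exact hτ'Q.2 u ⟨hu.1, huτ'.le⟩
    · rcases lt_or_eq_of_le haτ with halt | haeq
      · refine le_of_tendsto (show Tendsto (fun w => dist (F w) (G w)) (𝓝[<] u)
            (𝓝 (dist (F u) (G u))) from (hdc.tendsto u).mono_left nhdsWithin_le_nhds) ?_
        filter_upwards [Ioo_mem_nhdsLT_of_mem
          (show u ∈ Ioc a u from ⟨heq ▸ halt, le_rfl⟩)] with w hw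
        obtain ⟨τ', hτ'Q, huτ'⟩ := exists_lt_of_lt_csSup hQne (show w < τs from heq ▸ hw.2)
        exact hτ'Q.2 w ⟨hw.1.le, huτ'.le⟩
      · rw [heq, ← haeq]
        exact (hinit.trans_le hρm).le
  have hτsb : τs = b := by
    by_contra hne
    have hlt : τs < b := lt_of_le_of_ne hτb hne
    have hstrict := key τs ⟨haτ, hτb⟩ hτQ.2 τs ⟨haτ, le_rfl⟩
    have hev : ∀ᶠ w in 𝓝 τs, dist (F w) (G w) < m / 2 :=
      (hdc.continuousAt).eventually_lt continuousAt_const hstrict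
    obtain ⟨h, hh, hballs⟩ := Metric.eventually_nhds_iff.1 hev
    set τ₂ := min b (τs + h / 2) with hτ₂
    have hτ₂gt : τs < τ₂ := lt_min hlt (by linarith)
    have hτ₂Q : τ₂ ∈ Q := by
      refine ⟨⟨haτ.trans hτ₂gt.le, min_le_left _ _⟩, fun u hu => ?_⟩
      rcases le_or_gt u τs with hle | hgt
      · exact hτQ.2 u ⟨hu.1, hle⟩
      · have hd : dist u τs < h := by
          rw [Real.dist_eq, abs_of_pos (by linarith)]
          have : u ≤ τs + h / 2 := hu.2.trans (min_le_right _ _)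
          linarith
        exact (hballs hd).le
    exact absurd (le_csSup hQbdd hτ₂Q) (not_le.2 hτ₂gt)
  intro t ht
  have hfin := key b ⟨hab, le_rfl⟩ (hτsb ▸ hτQ.2) t ht
  exact hfin.trans_le ((half_lt_self hm0).le.trans (min_le_left _ _)) |>.trans_le le_rfl

noncomputable def myVf (f : X → ℝ) : X → X :=
  fun y => -((1 + ‖gradient f y‖)⁻¹ • gradient f y)

theorem myVf_deriv {f : X → ℝ} {η : ℝ → X → X} (hη : IsNSDFlow f η) (x : X) (t : ℝ) :
    HasDerivAt (fun s => η s x) (myVf f (η t x)) t := hη.2 x t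

theorem my_norm_Vf_le (f : X → ℝ) (y : X) : ‖myVf f y‖ ≤ 1 := by
  have h : (0:ℝ) < 1 + ‖gradient f y‖ := by positivity
  rw [myVf, norm_neg, norm_smul, Real.norm_eq_abs, abs_of_pos (inv_pos.2 h)]
  rw [inv_mul_le_iff₀ h]
  linarith [norm_nonneg (gradient f y)]

theorem my_flow_lipt {f : X → ℝ} {η : ℝ → X → X} (hη : IsNSDFlow f η) (x : X) (s t : ℝ) :
    dist (η s x) (η t x) ≤ dist s t := by
  have key := Convex.norm_image_sub_le_of_norm_hasDerivWithin_le (s := (univ : Set ℝ))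
    (f := fun u => η u x) (f' := fun u => myVf f (η u x))
    (fun u _ => (myVf_deriv hη x u).hasDerivWithinAt)
    (fun u _ => my_norm_Vf_le f (η u x)) convex_univ (mem_univ t) (mem_univ s)
  rw [dist_eq_norm, dist_eq_norm]
  simpa using key

theorem my_fcomp_deriv {f : X → ℝ} {η : ℝ → X → X} (hf : ContDiff ℝ 2 f)
    (hη : IsNSDFlow f η) (x : X) (t : ℝ) :
    HasDerivAt (fun s => f (η s x))
      (-((1 + ‖gradient f (η t x)‖)⁻¹ * ‖gradient f (η t x)‖ ^ 2)) t := by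
  have hgr : HasFDerivAt f (InnerProductSpace.toDual ℝ X (gradient f (η t x))) (η t x) :=
    ((hf.differentiable (by norm_num)).differentiableAt.hasGradientAt).hasFDerivAt
  have hcomp : HasDerivAt (fun s => f (η s x))
      (inner ℝ (gradient f (η t x)) (-((1 + ‖gradient f (η t x)‖)⁻¹ • gradient f (η t x)))) t := by
    have h := hgr.comp_hasDerivAt t (hη.2 x t)
    exact h
  convert hcomp using 1
  show -((1 + ‖gradient f (η t x)‖)⁻¹ * ‖gradient f (η t x)‖ ^ 2)
      = inner ℝ (gradient f (η t x)) (-((1 + ‖gradient f (η t x)‖)⁻¹ • gradient f (η t x)))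
  rw [inner_neg_right, real_inner_smul_right, real_inner_self_eq_norm_sq]

theorem my_descent {f : X → ℝ} {η : ℝ → X → X} (hf : ContDiff ℝ 2 f)
    (hη : IsNSDFlow f η) (x : X) : Antitone (fun t => f (η t x)) := by
  apply antitone_of_deriv_nonpos
  · exact fun t => (my_fcomp_deriv hf hη x t).differentiableAt
  · intro t
    rw [(my_fcomp_deriv hf hη x t).deriv]
    have h : (0:ℝ) < 1 + ‖gradient f (η t x)‖ := by positivity
    have : (0:ℝ) ≤ (1 + ‖gradient f (η t x)‖)⁻¹ * ‖gradient f (η t x)‖ ^ 2 := by positivity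
    linarith

theorem my_flow_cont {f : X → ℝ} {η : ℝ → X → X} (hη : IsNSDFlow f η) (x : X) :
    Continuous (fun t => η t x) :=
  continuous_iff_continuousAt.2 fun t => (hη.2 x t).continuousAt

theorem myVf_ll {f : X → ℝ} (hf : ContDiff ℝ 2 f) : LocallyLipschitz (myVf f) := by
  have h1 : ContDiff ℝ 1 (fderiv ℝ f) := hf.fderiv_right (by norm_num)
  have h2 : gradient f = (fun L => (InnerProductSpace.toDual ℝ X).symm L) ∘ (fderiv ℝ f) := rfl
  have h3 : LocallyLipschitz (gradient f) := by
    rw [h2]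
    exact ((InnerProductSpace.toDual ℝ X).symm.lipschitz.locallyLipschitz).comp h1.locallyLipschitz
  exact my_phi_lip.locallyLipschitz.comp h3


theorem stmt16 (f : X → ℝ) (hf : ContDiff ℝ 2 f) (η : ℝ → X → X)
    (hη : IsNSDFlow f η)
    (c : ℝ) (xbar : X) (hxbarc : f xbar < c) (hmin : StrictLocalMin f xbar)
    (S : Set X) (hS : S = connectedComponentIn {x : X | f x < c} xbar)
    (ε : ℝ) (hε : 0 < ε)
    (F : Set X) (hF : F = connectedComponentIn {x : X | f x < f xbar + ε} xbar)
    (r : ℝ) (hr : 0 < r) (hFr : F ⊆ ball xbar r)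
    (hcontr : ∀ x ∈ ball xbar r, ∀ l ∈ Icc (0:ℝ) 1, (1 - l) • x + l • xbar ∈ S)
    (T : X → ℝ) (hT : ∀ x₁ : X, T x₁ = sInf {t : ℝ | 0 ≤ t ∧ η t x₁ ∈ F})
    (α : X → ℝ → X)
    (hα : ∀ (x₁ : X) (s : ℝ), α x₁ s =
      if s ≤ 1/2 then η (T x₁ * (2 * s)) x₁
      else (1 - (2 * s - 1)) • η (T x₁) x₁ + (2 * s - 1) • xbar) :
    (∀ x₁ ∈ S, omegaLim η x₁ = {xbar} →
      ContinuousOn (α x₁) (Icc 0 1) ∧ α x₁ 0 = x₁ ∧ α x₁ 1 = xbar ∧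
      ∀ s ∈ Icc (0:ℝ) 1, α x₁ s ∈ S) ∧
    ContinuousOn T {x : X | omegaLim η x = {xbar}} ∧
    ∀ x₁ : X, omegaLim η x₁ = {xbar} → ∀ δ > 0, ∃ ρ > 0,
      ∀ x₂ : X, omegaLim η x₂ = {xbar} → dist x₁ x₂ < ρ →
        ∀ s ∈ Icc (0:ℝ) 1, dist (α x₁ s) (α x₂ s) < δ := by
  have hη0 : ∀ x, η 0 x = x := hη.1
  set L := f xbar + ε with hL
  have hV : LocallyLipschitz (myVf f) := myVf_ll hf
  have hopenL : IsOpen {x : X | f x < L} := isOpen_lt hf.continuous continuous_const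
  have hFopen : IsOpen F := by rw [hF]; exact hopenL.connectedComponentIn
  have hxbarF : xbar ∈ F := by
    rw [hF]
    exact mem_connectedComponentIn (by simp only [mem_setOf_eq]; linarith)
  have hFsub : F ⊆ {x : X | f x < L} := by
    rw [hF]; exact connectedComponentIn_subset _ _
  have hSsub : S ⊆ {x : X | f x < c} := by
    rw [hS]; exact connectedComponentIn_subset _ _
  -- key claim: along a trajectory with ω-limit {xbar}, sublevel < L implies membership in F
  have claim : ∀ x : X, omegaLim η x = {xbar} → ∀ t : ℝ, 0 ≤ t → f (η t x) < L →
      η t x ∈ F := by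
    intro x hω t ht hft
    have hxbar_mem : xbar ∈ omegaLim η x := by rw [hω]; rfl
    obtain ⟨ts, hts, hconv⟩ := hxbar_mem
    have h1 : ∀ᶠ n in atTop, η (ts n) x ∈ F := hconv.eventually (hFopen.mem_nhds hxbarF)
    have h2 : ∀ᶠ n in atTop, t ≤ ts n := hts.eventually_ge_atTop t
    obtain ⟨n, hnF, hnge⟩ := (h1.and h2).exists
    have harc : IsPreconnected ((fun u => η u x) '' Icc t (ts n)) :=
      isPreconnected_Icc.image _ (my_flow_cont hη x).continuousOn
    have harcsub : (fun u => η u x) '' Icc t (ts n) ⊆ {y : X | f y < L} := by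
      rintro _ ⟨u, hu, rfl⟩
      exact lt_of_le_of_lt (my_descent hf hη x hu.1) hft
    have hmem : η (ts n) x ∈ (fun u => η u x) '' Icc t (ts n) :=
      mem_image_of_mem _ ⟨hnge, le_rfl⟩
    have hsub2 := harc.subset_connectedComponentIn hmem harcsub
    have heq : connectedComponentIn {y : X | f y < L} (η (ts n) x) = F := by
      have h' : η (ts n) x ∈ connectedComponentIn {y : X | f y < L} xbar := by
        rw [← hF]; exact hnF
      rw [hF]
      exact (connectedComponentIn_eq h').symm
    have hin : η t x ∈ connectedComponentIn {y : X | f y < L} (η (ts n) x) :=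
      hsub2 (mem_image_of_mem _ ⟨le_rfl, hnge⟩)
    rwa [heq] at hin
  -- basic facts about the hitting-time set
  have hAne : ∀ x : X, omegaLim η x = {xbar} →
      Set.Nonempty {t : ℝ | 0 ≤ t ∧ η t x ∈ F} := by
    intro x hω
    have hxbar_mem : xbar ∈ omegaLim η x := by rw [hω]; rfl
    obtain ⟨ts, hts, hconv⟩ := hxbar_mem
    have h1 : ∀ᶠ n in atTop, η (ts n) x ∈ F := hconv.eventually (hFopen.mem_nhds hxbarF)
    have h2 : ∀ᶠ n in atTop, (0:ℝ) ≤ ts n := hts.eventually_ge_atTop 0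
    obtain ⟨n, hnF, hn0⟩ := (h1.and h2).exists
    exact ⟨ts n, hn0, hnF⟩
  have hAbdd : ∀ x : X, BddBelow {t : ℝ | 0 ≤ t ∧ η t x ∈ F} :=
    fun x => ⟨0, fun t ht => ht.1⟩
  have hT0 : ∀ x : X, omegaLim η x = {xbar} → 0 ≤ T x := by
    intro x hω
    rw [hT x]
    exact le_csInf (hAne x hω) fun t ht => ht.1
  have hTle : ∀ x : X, ∀ t : ℝ, 0 ≤ t → η t x ∈ F → T x ≤ t := by
    intro x t ht0 htF
    rw [hT x]
    exact csInf_le (hAbdd x) ⟨ht0, htF⟩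
  have hmemF_of_gt : ∀ x : X, omegaLim η x = {xbar} → ∀ t : ℝ, T x < t → η t x ∈ F := by
    intro x hω t htl
    obtain ⟨a, ha, halt⟩ := exists_lt_of_csInf_lt (hAne x hω) (by rw [← hT x]; exact htl)
    have ht0 : 0 ≤ t := ha.1.trans halt.le
    have hfa : f (η t x) < L := lt_of_le_of_lt (my_descent hf hη x halt.le) (hFsub ha.2)
    exact claim x hω t ht0 hfa
  have hnotF_of_lt : ∀ x : X, omegaLim η x = {xbar} → ∀ t : ℝ, 0 ≤ t → t < T x →
      L ≤ f (η t x) := by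
    intro x hω t ht0 htT
    by_contra hlt
    push_neg at hlt
    exact absurd (hTle x t ht0 (claim x hω t ht0 hlt)) (not_le.2 htT)
  -- continuous dependence specialized to the flow
  have hcd : ∀ (x : X) (b δ' : ℝ), 0 < δ' → ∃ ρ > 0, ∀ y : X, dist x y < ρ →
      ∀ t ∈ Icc (0:ℝ) b, dist (η t x) (η t y) < δ' := by
    intro x b δ' hδ'
    obtain ⟨ρ, hρ, hgen⟩ := my_contDep hV (fun t => myVf_deriv hη x t) 0 b hδ'
    exact ⟨ρ, hρ, fun y hxy t ht =>
      hgen (fun u => η u y) (fun u => myVf_deriv hη y u)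
        (by show dist (η 0 x) (η 0 y) < ρ; rwa [hη0, hη0]) t ht⟩
  -- the point η (T x) x lies in the closed ball of radius r
  have hTball : ∀ x : X, omegaLim η x = {xbar} → dist (η (T x) x) xbar ≤ r := by
    intro x hω
    by_contra hgt
    push_neg at hgt
    set e := dist (η (T x) x) xbar - r with he
    have he0 : 0 < e := by rw [he]; linarith
    obtain ⟨a, haA, halt⟩ := exists_lt_of_csInf_lt (hAne x hω)
      (by rw [← hT x]; linarith [hT0 x hω] : sInf {t : ℝ | 0 ≤ t ∧ η t x ∈ F} < T x + e)
    have hTa : T x ≤ a := hTle x a haA.1 haA.2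
    have h1 : dist (η (T x) x) (η a x) ≤ dist (T x) a := my_flow_lipt hη x _ _
    have h2 : dist (T x) a < e := by
      rw [Real.dist_eq, abs_of_nonpos (by linarith)]
      linarith
    have h3 : dist (η a x) xbar < r := hFr haA.2
    have := dist_triangle (η (T x) x) (η a x) xbar
    rw [he] at he0
    linarith
  -- Part 1
  have part1 : ∀ x₁ ∈ S, omegaLim η x₁ = {xbar} →
      ContinuousOn (α x₁) (Icc 0 1) ∧ α x₁ 0 = x₁ ∧ α x₁ 1 = xbar ∧
      ∀ s ∈ Icc (0:ℝ) 1, α x₁ s ∈ S := by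
    intro x₁ hx₁S hω
    have hT1 := hT0 x₁ hω
    have htraj : ∀ t ∈ Icc 0 (T x₁), η t x₁ ∈ S := by
      intro t ht
      have harc : IsPreconnected ((fun u => η u x₁) '' Icc 0 (T x₁)) :=
        isPreconnected_Icc.image _ (my_flow_cont hη x₁).continuousOn
      have harcsub : (fun u => η u x₁) '' Icc 0 (T x₁) ⊆ {y : X | f y < c} := by
        rintro _ ⟨u, hu, rfl⟩
        have h1 : f (η u x₁) ≤ f (η 0 x₁) := my_descent hf hη x₁ hu.1
        rw [hη0 x₁] at h1
        exact lt_of_le_of_lt h1 (hSsub hx₁S)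
      have hx₁mem : x₁ ∈ (fun u => η u x₁) '' Icc 0 (T x₁) :=
        ⟨0, ⟨le_rfl, hT1⟩, hη0 x₁⟩
      have hsub2 := harc.subset_connectedComponentIn hx₁mem harcsub
      have heq : connectedComponentIn {y : X | f y < c} x₁ = S := by
        have h' : x₁ ∈ connectedComponentIn {y : X | f y < c} xbar := by
          rw [← hS]; exact hx₁S
        rw [hS]
        exact (connectedComponentIn_eq h').symm
      have hin : η t x₁ ∈ connectedComponentIn {y : X | f y < c} x₁ :=
        hsub2 (mem_image_of_mem _ ht)
      rwa [heq] at hin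
    have hcontα : Continuous (α x₁) := by
      have hαeq : α x₁ = fun s => if s ≤ 1/2 then η (T x₁ * (2 * s)) x₁
          else (1 - (2 * s - 1)) • η (T x₁) x₁ + (2 * s - 1) • xbar := funext (hα x₁)
      have hc1 : Continuous fun s : ℝ => T x₁ * (2 * s) :=
        continuous_const.mul (continuous_const.mul continuous_id)
      have hc2 : Continuous fun s : ℝ => 2 * s - 1 :=
        (continuous_const.mul continuous_id).sub continuous_const
      have hc3 : Continuous fun s : ℝ => 1 - (2 * s - 1) := continuous_const.sub hc2
      rw [hαeq]
      apply Continuous.if_le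
      · exact (my_flow_cont hη x₁).comp hc1
      · exact (hc3.smul continuous_const).add (hc2.smul continuous_const)
      · exact continuous_id
      · exact continuous_const
      · intro s hs
        rw [hs]
        norm_num
    have hmemS : ∀ s ∈ Icc (0:ℝ) 1, α x₁ s ∈ S := by
      intro s hs
      rw [hα x₁ s]
      by_cases hhalf : s ≤ 1/2
      · rw [if_pos hhalf]
        apply htraj
        constructor
        · exact mul_nonneg hT1 (by linarith [hs.1])
        · calc T x₁ * (2 * s) ≤ T x₁ * 1 := mul_le_mul_of_nonneg_left (by linarith) hT1
            _ = T x₁ := mul_one _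
      · rw [if_neg hhalf]
        push_neg at hhalf
        have hl0 : 0 < 2 * s - 1 := by linarith
        have hl1 : 2 * s - 1 ≤ 1 := by linarith [hs.2]
        have hdball : (1 - (2 * s - 1)) • η (T x₁) x₁ + (2 * s - 1) • xbar ∈ ball xbar r := by
          rw [mem_ball, dist_eq_norm]
          have hvec : (1 - (2 * s - 1)) • η (T x₁) x₁ + (2 * s - 1) • xbar - xbar
              = (1 - (2 * s - 1)) • (η (T x₁) x₁ - xbar) := by
            module
          rw [hvec, norm_smul, Real.norm_eq_abs,
            abs_of_nonneg (by linarith : (0:ℝ) ≤ 1 - (2 * s - 1))]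
          have hd := hTball x₁ hω
          rw [dist_eq_norm] at hd
          calc (1 - (2 * s - 1)) * ‖η (T x₁) x₁ - xbar‖ ≤ (1 - (2 * s - 1)) * r :=
                mul_le_mul_of_nonneg_left hd (by linarith)
            _ < 1 * r := by
                apply mul_lt_mul_of_pos_right _ hr
                linarith
            _ = r := one_mul r
        have hres := hcontr _ hdball 0 ⟨le_rfl, zero_le_one⟩
        simpa using hres
    refine ⟨hcontα.continuousOn, ?_, ?_, hmemS⟩
    · rw [hα x₁ 0, if_pos (by norm_num)]
      rw [show T x₁ * (2 * 0) = 0 by ring]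
      exact hη0 x₁
    · rw [hα x₁ 1, if_neg (by norm_num)]
      norm_num
  -- Continuity of T (quantitative form)
  have Tcont : ∀ x₁ : X, omegaLim η x₁ = {xbar} → ∀ d > 0, ∃ ρ > 0, ∀ x₂ : X,
      omegaLim η x₂ = {xbar} → dist x₁ x₂ < ρ → |T x₂ - T x₁| < d := by
    intro x₁ hω₁ d hd
    have hT1 := hT0 x₁ hω₁
    have ht' : η (T x₁ + d/2) x₁ ∈ F := hmemF_of_gt x₁ hω₁ _ (by linarith)
    obtain ⟨r₁, hr₁, hball₁⟩ := Metric.isOpen_iff.1 hFopen _ ht'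
    obtain ⟨ρ₁, hρ₁, hcd₁⟩ := hcd x₁ (T x₁ + d/2) r₁ hr₁
    have hupper : ∀ x₂ : X, omegaLim η x₂ = {xbar} → dist x₁ x₂ < ρ₁ →
        T x₂ ≤ T x₁ + d/2 := by
      intro x₂ hω₂ hdist
      have h2 := hcd₁ x₂ hdist (T x₁ + d/2) ⟨by linarith, le_rfl⟩
      have hF2 : η (T x₁ + d/2) x₂ ∈ F := hball₁ (by rw [mem_ball, dist_comm]; exact h2)
      exact hTle x₂ _ (by linarith) hF2
    rcases le_or_gt (T x₁) (d/2) with hsmallT | hbigT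
    · refine ⟨ρ₁, hρ₁, fun x₂ hω₂ hdist => ?_⟩
      have hub := hupper x₂ hω₂ hdist
      have hlb := hT0 x₂ hω₂
      rw [abs_lt]
      constructor <;> linarith
    · set t'' := T x₁ - d/2 with ht''def
      have ht''pos : 0 < t'' := by rw [ht''def]; linarith
      have hgtL : L < f (η t'' x₁) := by
        rcases lt_or_eq_of_le (hnotF_of_lt x₁ hω₁ t'' ht''pos.le (by rw [ht''def]; linarith))
          with h | h
        · exact h
        · exfalso
          set s₀ := T x₁ - d/4 with hs₀def
          have hconst : ∀ u ∈ Ioo t'' (T x₁), f (η u x₁) = L := by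
            intro u hu
            have hge : L ≤ f (η u x₁) :=
              hnotF_of_lt x₁ hω₁ u (le_of_lt (ht''pos.trans hu.1)) hu.2
            have hle : f (η u x₁) ≤ f (η t'' x₁) := my_descent hf hη x₁ hu.1.le
            rw [← h] at hle
            linarith
          have hs₀mem : s₀ ∈ Ioo t'' (T x₁) := by
            constructor <;> [rw [hs₀def, ht''def]; rw [hs₀def]] <;> linarith
          have hnbhd : Ioo t'' (T x₁) ∈ 𝓝 s₀ := Ioo_mem_nhds hs₀mem.1 hs₀mem.2
          have hev : (fun u => f (η u x₁)) =ᶠ[𝓝 s₀] fun _ => L := by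
            filter_upwards [hnbhd] with u hu
            exact hconst u hu
          have hd0 : HasDerivAt (fun u => f (η u x₁)) 0 s₀ :=
            (hasDerivAt_const s₀ L).congr_of_eventuallyEq hev
          have hd1 := my_fcomp_deriv hf hη x₁ s₀
          have heq0 := hd1.unique hd0
          have hgz : gradient f (η s₀ x₁) = 0 := by
            have hpos : (0:ℝ) < 1 + ‖gradient f (η s₀ x₁)‖ := by positivity
            have hsq : ‖gradient f (η s₀ x₁)‖ ^ 2 = 0 := by
              have h2 : (1 + ‖gradient f (η s₀ x₁)‖)⁻¹ * ‖gradient f (η s₀ x₁)‖ ^ 2 = 0 :=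
                neg_eq_zero.1 heq0
              rcases mul_eq_zero.1 h2 with h3 | h3
              · exact absurd h3 (ne_of_gt (inv_pos.2 hpos))
              · exact h3
            have := pow_eq_zero_iff (n := 2) (by norm_num) |>.1 hsq
            exact norm_eq_zero.1 this
          set p := η s₀ x₁ with hpdef
          have hVp : myVf f p = 0 := by
            rw [myVf]
            simp only [hgz, smul_zero, neg_zero]
          have hconststay : ∀ t : ℝ, s₀ ≤ t → η t x₁ = p := by
            intro t hst
            have hsmalldist : ∀ d' > 0, dist (η t x₁) p < d' := by
              intro d' hd'
              obtain ⟨ρ', hρ', hgen⟩ := my_contDep hV (fun u => myVf_deriv hη x₁ u) s₀ t hd'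
              exact hgen (fun _ => p)
                (fun u => by rw [show myVf f ((fun _ => p) u) = 0 from hVp]; exact hasDerivAt_const u p)
                (by show dist (η s₀ x₁) p < ρ'; rw [hpdef, dist_self]; exact hρ') t ⟨hst, le_rfl⟩
            by_contra hne
            exact absurd (hsmalldist _ (dist_pos.2 hne)) (lt_irrefl _)
          have hxbar_mem : xbar ∈ omegaLim η x₁ := by rw [hω₁]; rfl
          obtain ⟨ts, hts, hconv⟩ := hxbar_mem
          have hev2 : ∀ᶠ n in atTop, η (ts n) x₁ = p := by
            filter_upwards [hts.eventually_ge_atTop s₀] with n hn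
            exact hconststay _ hn
          have htendsp : Tendsto (fun _ : ℕ => p) atTop (𝓝 xbar) := hconv.congr' hev2
          have hpxbar : p = xbar := tendsto_nhds_unique tendsto_const_nhds htendsp
          have hfp : f p = L := hconst s₀ hs₀mem
          rw [hpxbar, hL] at hfp
          linarith
      have hopengt : IsOpen {y : X | L < f y} := isOpen_lt continuous_const hf.continuous
      obtain ⟨r₂, hr₂, hball₂⟩ := Metric.isOpen_iff.1 hopengt _ hgtL
      obtain ⟨ρ₂, hρ₂, hcd₂⟩ := hcd x₁ t'' r₂ hr₂
      refine ⟨min ρ₁ ρ₂, lt_min hρ₁ hρ₂, fun x₂ hω₂ hdist => ?_⟩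
      have hub := hupper x₂ hω₂ (hdist.trans_le (min_le_left _ _))
      have hlower : t'' ≤ T x₂ := by
        rw [hT x₂]
        apply le_csInf (hAne x₂ hω₂)
        intro a ha
        by_contra hlt'
        push_neg at hlt'
        have hd2 := hcd₂ x₂ (hdist.trans_le (min_le_right _ _)) t'' ⟨ht''pos.le, le_rfl⟩
        have hfa : L < f (η t'' x₂) := hball₂ (by rw [mem_ball, dist_comm]; exact hd2)
        have hmono : f (η t'' x₂) ≤ f (η a x₂) := my_descent hf hη x₂ hlt'.le
        have hfb : f (η a x₂) < L := hFsub ha.2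
        linarith
      rw [ht''def] at hlower
      rw [abs_lt]
      constructor <;> linarith
  -- Part 2
  have part2 : ContinuousOn T {x : X | omegaLim η x = {xbar}} := by
    rw [Metric.continuousOn_iff]
    intro x₁ hx₁ d hd
    obtain ⟨ρ, hρ, hloc⟩ := Tcont x₁ hx₁ d hd
    refine ⟨ρ, hρ, fun x₂ hx₂ hdist => ?_⟩
    rw [Real.dist_eq]
    exact hloc x₂ hx₂ (by rwa [dist_comm])
  -- Part 3
  have part3 : ∀ x₁ : X, omegaLim η x₁ = {xbar} → ∀ δ > 0, ∃ ρ > 0,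
      ∀ x₂ : X, omegaLim η x₂ = {xbar} → dist x₁ x₂ < ρ →
        ∀ s ∈ Icc (0:ℝ) 1, dist (α x₁ s) (α x₂ s) < δ := by
    intro x₁ hω₁ δ hδ
    obtain ⟨ρT, hρT, hTc⟩ := Tcont x₁ hω₁ (min 1 (δ/4)) (lt_min one_pos (by linarith))
    obtain ⟨ρ₂, hρ₂, hcd₂⟩ := hcd x₁ (T x₁ + 1) (δ/4) (by linarith)
    refine ⟨min ρT ρ₂, lt_min hρT hρ₂, fun x₂ hω₂ hdist s hs => ?_⟩
    have hTT : |T x₂ - T x₁| < min 1 (δ/4) := hTc x₂ hω₂ (hdist.trans_le (min_le_left _ _))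
    have hTT1 : |T x₂ - T x₁| < 1 := hTT.trans_le (min_le_left _ _)
    have hTTd : |T x₁ - T x₂| < δ/4 := by
      rw [abs_sub_comm]
      exact hTT.trans_le (min_le_right _ _)
    have hT2b : T x₂ ≤ T x₁ + 1 := by
      have := (abs_lt.1 hTT1).2
      linarith
    have hT20 : 0 ≤ T x₂ := hT0 x₂ hω₂
    have hflows : ∀ t ∈ Icc (0:ℝ) (T x₁ + 1), dist (η t x₁) (η t x₂) < δ/4 :=
      hcd₂ x₂ (hdist.trans_le (min_le_right _ _))
    rw [hα x₁ s, hα x₂ s]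
    by_cases hhalf : s ≤ 1/2
    · rw [if_pos hhalf, if_pos hhalf]
      have hu0 : (0:ℝ) ≤ 2 * s := by linarith [hs.1]
      have hu1 : 2 * s ≤ 1 := by linarith
      have hstep1 : dist (η (T x₁ * (2 * s)) x₁) (η (T x₂ * (2 * s)) x₁) < δ/4 := by
        have h1 : dist (η (T x₁ * (2 * s)) x₁) (η (T x₂ * (2 * s)) x₁)
            ≤ dist (T x₁ * (2 * s)) (T x₂ * (2 * s)) := my_flow_lipt hη x₁ _ _
        have h2 : dist (T x₁ * (2 * s)) (T x₂ * (2 * s)) = |T x₁ - T x₂| * (2 * s) := by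
          rw [Real.dist_eq, ← sub_mul, abs_mul, abs_of_nonneg hu0]
        have h3 : |T x₁ - T x₂| * (2 * s) ≤ |T x₁ - T x₂| :=
          mul_le_of_le_one_right (abs_nonneg _) hu1
        calc dist (η (T x₁ * (2 * s)) x₁) (η (T x₂ * (2 * s)) x₁)
            ≤ |T x₁ - T x₂| * (2 * s) := by rw [← h2]; exact h1
          _ ≤ |T x₁ - T x₂| := h3
          _ < δ/4 := hTTd
      have hstep2 : dist (η (T x₂ * (2 * s)) x₁) (η (T x₂ * (2 * s)) x₂) < δ/4 := by
        apply hflows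
        constructor
        · exact mul_nonneg hT20 hu0
        · calc T x₂ * (2 * s) ≤ T x₂ * 1 := mul_le_mul_of_nonneg_left hu1 hT20
            _ = T x₂ := mul_one _
            _ ≤ T x₁ + 1 := hT2b
      calc dist (η (T x₁ * (2 * s)) x₁) (η (T x₂ * (2 * s)) x₂)
          ≤ dist (η (T x₁ * (2 * s)) x₁) (η (T x₂ * (2 * s)) x₁)
            + dist (η (T x₂ * (2 * s)) x₁) (η (T x₂ * (2 * s)) x₂) := dist_triangle _ _ _
        _ < δ/4 + δ/4 := add_lt_add hstep1 hstep2
        _ < δ := by linarith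
    · rw [if_neg hhalf, if_neg hhalf]
      push_neg at hhalf
      have hl0 : (0:ℝ) ≤ 2 * s - 1 := by linarith
      have hl1 : 2 * s - 1 ≤ 1 := by linarith [hs.2]
      rw [dist_eq_norm]
      have hvec : (1 - (2 * s - 1)) • η (T x₁) x₁ + (2 * s - 1) • xbar
          - ((1 - (2 * s - 1)) • η (T x₂) x₂ + (2 * s - 1) • xbar)
          = (1 - (2 * s - 1)) • (η (T x₁) x₁ - η (T x₂) x₂) := by
        module
      rw [hvec, norm_smul, Real.norm_eq_abs,
        abs_of_nonneg (by linarith : (0:ℝ) ≤ 1 - (2 * s - 1))]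
      have hkey : dist (η (T x₁) x₁) (η (T x₂) x₂) < δ/2 := by
        have h1 : dist (η (T x₁) x₁) (η (T x₂) x₁) < δ/4 := by
          calc dist (η (T x₁) x₁) (η (T x₂) x₁) ≤ dist (T x₁) (T x₂) := my_flow_lipt hη x₁ _ _
            _ = |T x₁ - T x₂| := Real.dist_eq _ _
            _ < δ/4 := hTTd
        have h2 : dist (η (T x₂) x₁) (η (T x₂) x₂) < δ/4 := hflows (T x₂) ⟨hT20, hT2b⟩
        calc dist (η (T x₁) x₁) (η (T x₂) x₂)
            ≤ dist (η (T x₁) x₁) (η (T x₂) x₁) + dist (η (T x₂) x₁) (η (T x₂) x₂) :=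
              dist_triangle _ _ _
          _ < δ/4 + δ/4 := add_lt_add h1 h2
          _ = δ/2 := by ring
      calc (1 - (2 * s - 1)) * ‖η (T x₁) x₁ - η (T x₂) x₂‖
          ≤ 1 * ‖η (T x₁) x₁ - η (T x₂) x₂‖ := by gcongr; linarith
        _ = dist (η (T x₁) x₁) (η (T x₂) x₂) := by rw [one_mul, dist_eq_norm]
        _ < δ/2 := hkey
        _ < δ := by linarith
  exact ⟨part1, part2, part3⟩
end

section
/- Let f be a C² functional on a Hilbert space X satisfying: (h1) f ≥ 0; (h2) there exists c such that some nonempty connected component of the sublevel f^c = {x : f(x) < c} is not simply connected; (h3) f satisfies the Palais–Smale condition at every level c₀ ∈ [0,c). Then either f has a continuum of global minimizers in f^c, or there exists a critical point x̂ ∈ f^c of f which is not a strict local minimizer. -/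
set_option linter.unusedSectionVars false


open Filter Topology Metric Set

variable {X : Type*} [NormedAddCommGroup X] [InnerProductSpace ℝ X] [CompleteSpace X]

/-- Ekeland-type variational principle: a point where the perturbed functional
cannot be improved. -/
theorem ekeland_aux {E : Type*} [MetricSpace E] [Nonempty E] [CompleteSpace E]
    (Φ : E → ℝ) {L : ℝ} (hbdd : ∀ e, L ≤ Φ e)
    (hlsc : ∀ (u : ℕ → E) (v : E), Tendsto u atTop (𝓝 v) →
      ∀ Lv : ℝ, Tendsto (fun n => Φ (u n)) atTop (𝓝 Lv) → Φ v ≤ Lv)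
    {lam : ℝ} (hlam : 0 < lam) :
    ∃ v : E, ∀ u : E, Φ v ≤ Φ u + lam * dist u v := by
  classical
  -- the set of improvements of v
  set F : E → Set E := fun v => {w | Φ w + lam * dist w v ≤ Φ v} with hF
  have hmemF : ∀ v, v ∈ F v := by intro v; simp [hF]
  have hbddim : ∀ v, BddBelow (Φ '' F v) := by
    intro v; exact ⟨L, by rintro y ⟨w, _, rfl⟩; exact hbdd w⟩
  have hneim : ∀ v, (Φ '' F v).Nonempty := fun v => ⟨Φ v, v, hmemF v, rfl⟩
  have hstep : ∀ (n : ℕ) (v : E), ∃ w, w ∈ F v ∧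
      Φ w ≤ sInf (Φ '' F v) + (1/2 : ℝ)^n := by
    intro n v
    obtain ⟨y, ⟨w, hw, rfl⟩, hy⟩ := Real.lt_sInf_add_pos (hneim v)
      (show (0:ℝ) < (1/2)^n by positivity)
    exact ⟨w, hw, hy.le⟩
  let u : ℕ → E := fun n => Nat.rec (Classical.arbitrary E)
    (fun n prev => (hstep n prev).choose) n
  have hu_succ : ∀ n, u (n+1) = (hstep n (u n)).choose := fun n => rfl
  have huF : ∀ n, u (n+1) ∈ F (u n) := by
    intro n; rw [hu_succ]; exact (hstep n (u n)).choose_spec.1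
  have huInf : ∀ n, Φ (u (n+1)) ≤ sInf (Φ '' F (u n)) + (1/2:ℝ)^n := by
    intro n; rw [hu_succ]; exact (hstep n (u n)).choose_spec.2
  have hanti : Antitone fun n => Φ (u n) := by
    apply antitone_nat_of_succ_le
    intro n
    have := huF n
    simp only [hF, Set.mem_setOf_eq] at this
    nlinarith [dist_nonneg (x := u (n+1)) (y := u n)]
  have hbddrange : BddBelow (Set.range fun n => Φ (u n)) := ⟨L, by rintro y ⟨n, rfl⟩; exact hbdd _⟩
  set Linf : ℝ := ⨅ n, Φ (u n) with hLinf
  have htend : Tendsto (fun n => Φ (u n)) atTop (𝓝 Linf) := tendsto_atTop_ciInf hanti hbddrange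
  have hLinf_le : ∀ n, Linf ≤ Φ (u n) := fun n => ciInf_le hbddrange n
  -- telescoping distance bound
  have htel : ∀ n m, n ≤ m → lam * dist (u n) (u m) ≤ Φ (u n) - Φ (u m) := by
    intro n m hnm
    induction m, hnm using Nat.le_induction with
    | base => simp
    | succ m hnm ih =>
      have h1 := huF m
      simp only [hF, Set.mem_setOf_eq] at h1
      have h2 : lam * dist (u n) (u (m+1)) ≤ lam * dist (u n) (u m) + lam * dist (u (m+1)) (u m) := by
        rw [← mul_add]
        have := dist_triangle (u n) (u m) (u (m+1))
        rw [dist_comm (u (m+1)) (u m)]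
        nlinarith
      nlinarith
  -- Cauchy
  have hcauchy : CauchySeq u := by
    apply cauchySeq_of_le_tendsto_0 (fun N => (Φ (u N) - Linf) / lam)
    · intro n m N hNn hNm
      rcases le_total n m with h | h
      · have := htel n m h
        have h2 : Φ (u n) ≤ Φ (u N) := hanti hNn
        have h3 := hLinf_le m
        rw [le_div_iff₀ hlam]
        nlinarith
      · have := htel m n h
        have h2 : Φ (u m) ≤ Φ (u N) := hanti hNm
        have h3 := hLinf_le n
        rw [dist_comm]
        rw [le_div_iff₀ hlam]
        nlinarith
    · have : Tendsto (fun N => (Φ (u N) - Linf) / lam) atTop (𝓝 ((Linf - Linf)/lam)) :=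
        ((htend.sub tendsto_const_nhds).div_const lam)
      simpa using this
  obtain ⟨v, hv⟩ := cauchySeq_tendsto_of_complete hcauchy
  have hΦv : Φ v ≤ Linf := hlsc u v hv Linf htend
  -- v ∈ F (u n) for each n
  have hvF : ∀ n, Φ v + lam * dist v (u n) ≤ Φ (u n) := by
    intro n
    have hd : lam * dist v (u n) ≤ Φ (u n) - Linf := by
      have h1 : Tendsto (fun m => lam * dist (u m) (u n)) atTop (𝓝 (lam * dist v (u n))) :=
        (((continuous_id.dist continuous_const).tendsto v).comp hv).const_mul lam
      apply le_of_tendsto h1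
      filter_upwards [eventually_ge_atTop n] with m hm
      calc lam * dist (u m) (u n) = lam * dist (u n) (u m) := by rw [dist_comm]
        _ ≤ Φ (u n) - Φ (u m) := htel n m hm
        _ ≤ Φ (u n) - Linf := by linarith [hLinf_le m]
    linarith
  refine ⟨v, fun w => ?_⟩
  by_contra hcon
  push_neg at hcon
  -- then w ∈ F (u n) for all n
  have hwF : ∀ n, w ∈ F (u n) := by
    intro n
    simp only [hF, Set.mem_setOf_eq]
    have htri : dist w (u n) ≤ dist w v + dist v (u n) := dist_triangle _ _ _
    have := hvF n
    nlinarith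
  have hwge : ∀ n, sInf (Φ '' F (u n)) ≤ Φ w := fun n => csInf_le (hbddim _) ⟨w, hwF n, rfl⟩
  have : ∀ n, Φ (u (n+1)) ≤ Φ w + (1/2:ℝ)^n := fun n => le_trans (huInf n) (by linarith [hwge n])
  have hLw : Linf ≤ Φ w := by
    have h1 : Tendsto (fun n => Φ (u (n+1))) atTop (𝓝 Linf) := htend.comp (tendsto_add_atTop_nat 1)
    have h2 : Tendsto (fun n => Φ w + (1/2:ℝ)^n) atTop (𝓝 (Φ w + 0)) :=
      tendsto_const_nhds.add (tendsto_pow_atTop_nhds_zero_of_lt_one (by norm_num) (by norm_num))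
    have := le_of_tendsto_of_tendsto' h1 h2 this
    simpa using this
  have : Φ v ≤ Φ w := le_trans hΦv hLw
  nlinarith [dist_nonneg (x := w) (y := v)]


theorem transfer_contract {S : Set X} {γ γ' : ℝ → X} (P : ℝ → ℝ → X)
    (hP : ContinuousOn (fun p : ℝ × ℝ => P p.1 p.2) (Icc 0 1 ×ˢ Icc 0 1))
    (hPS : ∀ l ∈ Icc (0:ℝ) 1, ∀ s ∈ Icc (0:ℝ) 1, P l s ∈ S)
    (hP0 : ∀ s ∈ Icc (0:ℝ) 1, P 0 s = γ s)
    (hP1 : ∀ s ∈ Icc (0:ℝ) 1, P 1 s = γ' s)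
    (hPloop : ∀ l ∈ Icc (0:ℝ) 1, P l 0 = P l 1)
    (hc : LoopContractibleIn S γ') : LoopContractibleIn S γ := by
  classical
  obtain ⟨h, p₀, hhc, hhS, hh0, hh1, hhl⟩ := hc
  have hmem1 : ∀ l ∈ Icc (0:ℝ) 1, min (2*l) 1 ∈ Icc (0:ℝ) 1 := by
    rintro l ⟨h0, h1⟩
    constructor
    · exact le_min (by linarith) (by norm_num)
    · exact min_le_right _ _
  have hmem2 : ∀ l ∈ Icc (0:ℝ) 1, max (2*l-1) 0 ∈ Icc (0:ℝ) 1 := by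
    rintro l ⟨h0, h1⟩
    constructor
    · exact le_max_right _ _
    · exact max_le (by linarith) (by norm_num)
  refine ⟨fun l s => if l ≤ 1/2 then P (min (2*l) 1) s else h (max (2*l-1) 0) s, p₀, ?_, ?_, ?_, ?_, ?_⟩
  · -- continuity
    have hc1 : ContinuousOn (fun q : ℝ × ℝ => P (min (2*q.1) 1) q.2) (Icc 0 1 ×ˢ Icc 0 1) := by
      apply ContinuousOn.comp (g := fun p : ℝ × ℝ => P p.1 p.2)
        (f := fun q : ℝ × ℝ => (min (2*q.1) 1, q.2)) hP
      · exact (((continuous_const.mul continuous_fst).min continuous_const).prodMk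
          continuous_snd).continuousOn
      · rintro ⟨l, s⟩ ⟨hl, hs⟩
        exact ⟨hmem1 l hl, hs⟩
    have hc2 : ContinuousOn (fun q : ℝ × ℝ => h (max (2*q.1-1) 0) q.2) (Icc 0 1 ×ˢ Icc 0 1) := by
      apply ContinuousOn.comp (g := fun p : ℝ × ℝ => h p.1 p.2)
        (f := fun q : ℝ × ℝ => (max (2*q.1-1) 0, q.2)) hhc
      · exact ((((continuous_const.mul continuous_fst).sub continuous_const).max
          continuous_const).prodMk continuous_snd).continuousOn
      · rintro ⟨l, s⟩ ⟨hl, hs⟩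
        exact ⟨hmem2 l hl, hs⟩
    apply ContinuousOn.if
    · rintro ⟨l, s⟩ ⟨hq, hfr⟩
      have : l = 1/2 :=
        frontier_le_subset_eq (f := fun q : ℝ × ℝ => q.1) (g := fun _ => (1/2:ℝ))
          continuous_fst continuous_const hfr
      subst this
      simp only []
      rw [show min (2*(1/2:ℝ)) 1 = 1 by norm_num, show max (2*(1/2:ℝ)-1) 0 = 0 by norm_num]
      rw [hP1 s hq.2, hh0 s hq.2]
    · exact hc1.mono inter_subset_left
    · exact hc2.mono inter_subset_left
  · -- in S
    intro l hl s hs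
    by_cases hhalf : l ≤ 1/2
    · simp only [hhalf, if_true]; exact hPS _ (hmem1 l hl) s hs
    · simp only [hhalf, if_false]; exact hhS _ (hmem2 l hl) s hs
  · intro s hs
    show (if (0:ℝ) ≤ 1/2 then P (min (2*0) 1) s else h (max (2*0-1) 0) s) = γ s
    rw [if_pos (by norm_num : (0:ℝ) ≤ 1/2), show min (2*(0:ℝ)) 1 = 0 by norm_num]
    exact hP0 s hs
  · intro s hs
    show (if (1:ℝ) ≤ 1/2 then P (min (2*1) 1) s else h (max (2*1-1) 0) s) = p₀
    rw [if_neg (by norm_num : ¬ ((1:ℝ) ≤ 1/2)), show max (2*(1:ℝ)-1) 0 = 1 by norm_num]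
    exact hh1 s hs
  · intro l hl
    by_cases hhalf : l ≤ 1/2
    · simp only [hhalf, if_true]; exact hPloop _ (hmem1 l hl)
    · simp only [hhalf, if_false]; exact hhl _ (hmem2 l hl)

theorem contract_in_convex {S K : Set X} (hK : Convex ℝ K) (hKS : K ⊆ S) {γ : ℝ → X}
    (hγc : ContinuousOn γ (Icc 0 1)) (hγK : ∀ s ∈ Icc (0:ℝ) 1, γ s ∈ K)
    {x : X} (hx : x ∈ K) (hloop : γ 0 = γ 1) : LoopContractibleIn S γ := by
  refine ⟨fun l s => (1-l) • γ s + l • x, x, ?_, ?_, ?_, ?_, ?_⟩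
  · apply ContinuousOn.add
    · apply ContinuousOn.smul
      · exact (continuous_const.sub continuous_fst).continuousOn
      · exact hγc.comp continuous_snd.continuousOn (fun q hq => hq.2)
    · exact (continuous_fst.smul continuous_const).continuousOn
  · rintro l ⟨hl0, hl1⟩ s hs
    exact hKS (hK (hγK s hs) hx (by linarith) hl0 (by ring))
  · intro s _; simp
  · intro s _; simp
  · rintro l _; simp only []; rw [hloop]

theorem mem_comp_of_closure {U : Set X} {x₀ y : X} (hx₀ : x₀ ∈ U)
    (hy : y ∈ closure (connectedComponentIn U x₀)) (hyU : y ∈ U) :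
    y ∈ connectedComponentIn U x₀ := by
  have hpre : IsPreconnected (connectedComponentIn U x₀ ∪ {y}) := by
    apply (isPreconnected_connectedComponentIn).subset_closure subset_union_left
    exact union_subset subset_closure (by simpa using hy)
  have := hpre.subset_connectedComponentIn
    (Or.inl (mem_connectedComponentIn hx₀))
    (union_subset (connectedComponentIn_subset U x₀) (by simpa using hyU))
  exact this (Or.inr rfl)



set_option maxHeartbeats 1200000 in
theorem stmt18 (f : X → ℝ) (hf : ContDiff ℝ 2 f)
    (h1 : ∀ x : X, 0 ≤ f x)
    (c : ℝ) (x₀ : X) (hx₀ : f x₀ < c)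
    (h2 : ¬ SimplyConnIn (connectedComponentIn {x : X | f x < c} x₀))
    (h3 : ∀ c₀ : ℝ, 0 ≤ c₀ → c₀ < c →
      ∀ u : ℕ → X, Tendsto (fun m => f (u m)) atTop (𝓝 c₀) →
        Tendsto (fun m => gradient f (u m)) atTop (𝓝 (0 : X)) →
        ∃ (φ : ℕ → ℕ) (y : X), StrictMono φ ∧ Tendsto (fun k => u (φ k)) atTop (𝓝 y)) :
    (∃ M : Set X, M ⊆ {x : X | f x < c} ∧ IsPreconnected M ∧ M.Nontrivial ∧
      ∀ y ∈ M, ∀ z : X, f y ≤ f z) ∨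
    ∃ xhat : X, f xhat < c ∧ gradient f xhat = 0 ∧ ¬ StrictLocalMin f xhat := by
  classical
  by_contra hcon
  push_neg at hcon
  obtain ⟨-, hA2⟩ := hcon
  -- basic analytic facts
  have hfc : Continuous f := hf.continuous
  have hfd : ∀ x : X, HasGradientAt f (gradient f x) x := fun x =>
    ((hf.differentiable (by norm_num)) x).hasGradientAt
  have hgradc : Continuous (gradient f) := by
    have h1' : Continuous (fderiv ℝ f) := hf.continuous_fderiv (by norm_num)
    exact (InnerProductSpace.toDual ℝ X).symm.continuous.comp h1'
  have hcurve : ∀ (x v : X) (τ₀ : ℝ), HasDerivAt (fun τ : ℝ => f (x - τ • v))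
      (-(inner ℝ (gradient f (x - τ₀ • v)) v : ℝ)) τ₀ := by
    intro x v τ₀
    have hc : HasDerivAt (fun τ : ℝ => x - τ • v) (-v) τ₀ := by
      simpa using ((hasDerivAt_id τ₀).smul_const v).const_sub x
    have hfd' := (hfd (x - τ₀ • v)).hasFDerivAt
    have hcomp := hfd'.comp_hasDerivAt τ₀ hc
    have hval : (InnerProductSpace.toDual ℝ X (gradient f (x - τ₀ • v))) (-v)
        = -(inner ℝ (gradient f (x - τ₀ • v)) v) := by
      rw [InnerProductSpace.toDual_apply_apply, inner_neg_right]
    rw [hval] at hcomp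
    exact hcomp
  -- the component
  set S := connectedComponentIn {x : X | f x < c} x₀ with hSdef
  have hx₀mem : x₀ ∈ {x : X | f x < c} := hx₀
  have hSsub : S ⊆ {x : X | f x < c} := connectedComponentIn_subset _ _
  have hsubopen : IsOpen {x : X | f x < c} := isOpen_lt hfc continuous_const
  have hSopen : IsOpen S := hsubopen.connectedComponentIn
  have hclos : ∀ y, y ∈ closure S → f y < c → y ∈ S := fun y hy hyc =>
    mem_comp_of_closure hx₀mem hy hyc
  -- the loop space
  have h01 : (0:ℝ) ≤ 1 := zero_le_one
  haveI : Nonempty ↥(Icc (0:ℝ) 1) := ⟨⟨0, by norm_num⟩⟩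
  set zer : ↥(Icc (0:ℝ) 1) := ⟨0, by norm_num⟩ with hzer
  set one : ↥(Icc (0:ℝ) 1) := ⟨1, by norm_num⟩ with hone
  set Φ : C(↥(Icc (0:ℝ) 1), X) → ℝ := fun g => ⨆ s, f (g s) with hΦdef
  set ext : C(↥(Icc (0:ℝ) 1), X) → ℝ → X := fun g => IccExtend h01 ⇑g with hextdef
  have hext_mem : ∀ (g : C(↥(Icc (0:ℝ) 1), X)) (s : ℝ) (hs : s ∈ Icc (0:ℝ) 1),
      ext g s = g ⟨s, hs⟩ := fun g s hs => IccExtend_of_mem h01 ⇑g hs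
  have hext_coe : ∀ (g : C(↥(Icc (0:ℝ) 1), X)) (s : ↥(Icc (0:ℝ) 1)), ext g ↑s = g s := by
    intro g s
    rw [hext_mem g ↑s s.2]
  have hext_cont : ∀ g : C(↥(Icc (0:ℝ) 1), X), Continuous (ext g) := fun g =>
    g.continuous.Icc_extend'
  set NC : C(↥(Icc (0:ℝ) 1), X) → Prop := fun g => ¬ LoopContractibleIn S (ext g) with hNCdef
  set Good : C(↥(Icc (0:ℝ) 1), X) → Prop :=
    fun g => (∀ s, g s ∈ S) ∧ g zer = g one ∧ NC g with hGooddef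
  have hbdda : ∀ g : C(↥(Icc (0:ℝ) 1), X), BddAbove (range fun s => f (g s)) := fun g =>
    (isCompact_range (hfc.comp (map_continuous g))).bddAbove
  have hle_Φ : ∀ (g : C(↥(Icc (0:ℝ) 1), X)) s, f (g s) ≤ Φ g := fun g s =>
    le_ciSup (hbdda g) s
  have hΦ_ge0 : ∀ g : C(↥(Icc (0:ℝ) 1), X), 0 ≤ Φ g := fun g =>
    le_trans (h1 (g zer)) (hle_Φ g zer)
  -- the base noncontractible loop
  rw [SimplyConnIn] at h2
  push_neg at h2
  obtain ⟨γ₀, hγ₀c, hγ₀S, hγ₀loop, hγ₀nc⟩ := h2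
  set g₀ : C(↥(Icc (0:ℝ) 1), X) := ⟨(Icc (0:ℝ) 1).restrict γ₀, hγ₀c.restrict⟩ with hg₀def
  have hGoodg₀ : Good g₀ := by
    refine ⟨fun s => hγ₀S ↑s s.2, ?_, ?_⟩
    · show γ₀ 0 = γ₀ 1
      exact hγ₀loop
    · intro hcontr
      apply hγ₀nc
      obtain ⟨h, p₀, hc1, hc2, hc3, hc4, hc5⟩ := hcontr
      exact ⟨h, p₀, hc1, hc2, fun s hs => by rw [hc3 s hs, hext_mem g₀ s hs]; rfl, hc4, hc5⟩
  have hΦg₀c : Φ g₀ < c := by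
    obtain ⟨smax, -, hmax⟩ := isCompact_univ.exists_isMaxOn univ_nonempty
      ((hfc.comp (map_continuous g₀)).continuousOn)
    exact lt_of_le_of_lt (ciSup_le fun s => hmax (mem_univ s)) (hSsub (hγ₀S ↑smax smax.2))
  -- the minimax value
  set cstar : ℝ := sInf (Φ '' {g | Good g}) with hcstardef
  have hΓne : (Φ '' {g | Good g}).Nonempty := ⟨Φ g₀, g₀, hGoodg₀, rfl⟩
  have hΓbdd : BddBelow (Φ '' {g | Good g}) := ⟨0, by rintro y ⟨g, -, rfl⟩; exact hΦ_ge0 g⟩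
  have hcstar_le : ∀ g, Good g → cstar ≤ Φ g := fun g hg => csInf_le hΓbdd ⟨g, hg, rfl⟩
  have hcstar0 : 0 ≤ cstar := le_csInf hΓne (by rintro y ⟨g, -, rfl⟩; exact hΦ_ge0 g)
  have hcstarc : cstar < c := lt_of_le_of_lt (hcstar_le g₀ hGoodg₀) hΦg₀c
  -- the critical set at level cstar is finite
  set Kstar : Set X := {x | f x = cstar ∧ gradient f x = 0} with hKdef
  have hKfin : Kstar.Finite := by
    by_contra hinf
    have hinf' : Kstar.Infinite := hinf
    set e := hinf'.natEmbedding with hedef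
    set u : ℕ → X := fun n => ((e n : ↥Kstar) : X) with hudef
    have hu : ∀ n, u n ∈ Kstar := fun n => (e n).2
    have htf : Tendsto (fun m => f (u m)) atTop (𝓝 cstar) := by
      have : (fun m => f (u m)) = fun _ => cstar := funext fun m => (hu m).1
      rw [this]; exact tendsto_const_nhds
    have htg : Tendsto (fun m => gradient f (u m)) atTop (𝓝 (0:X)) := by
      have : (fun m => gradient f (u m)) = fun _ => (0:X) := funext fun m => (hu m).2
      rw [this]; exact tendsto_const_nhds
    obtain ⟨ψ, y, hψ, hconv⟩ := h3 cstar hcstar0 hcstarc u htf htg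
    have hfy : f y = cstar := by
      refine tendsto_nhds_unique ((hfc.tendsto y).comp hconv) ?_
      have : (fun k => f (u (ψ k))) = fun _ => cstar := funext fun k => (hu (ψ k)).1
      rw [show (f ∘ fun k => u (ψ k)) = fun k => f (u (ψ k)) from rfl, this]
      exact tendsto_const_nhds
    have hgy : gradient f y = 0 := by
      refine tendsto_nhds_unique ((hgradc.tendsto y).comp hconv) ?_
      have : (fun k => gradient f (u (ψ k))) = fun _ => (0:X) := funext fun k => (hu (ψ k)).2
      rw [show (gradient f ∘ fun k => u (ψ k)) = fun k => gradient f (u (ψ k)) from rfl, this]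
      exact tendsto_const_nhds
    obtain ⟨r₀, hr₀pos, hsl⟩ := hA2 y (by rw [hfy]; exact hcstarc) hgy
    obtain ⟨N, hN⟩ := Metric.tendsto_atTop.mp hconv r₀ hr₀pos
    have hinj : Function.Injective fun k => u (ψ k) := by
      intro a b hab
      have := e.injective (Subtype.val_injective hab)
      exact hψ.injective this
    set k : ℕ := if u (ψ N) = y then N + 1 else N with hkdef
    have hkN : N ≤ k := by
      rw [hkdef]; split <;> omega
    have hkney : u (ψ k) ≠ y := by
      rw [hkdef]; split
      · rename_i hNy
        intro hk
        have : u (ψ (N+1)) = u (ψ N) := by rw [hk, hNy]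
        have := hinj this
        omega
      · assumption
    have hkdist : dist (u (ψ k)) y < r₀ := hN k hkN
    have hrpos' : 0 < dist (u (ψ k)) y := dist_pos.mpr hkney
    obtain ⟨ε, hεpos, hsp⟩ := hsl (dist (u (ψ k)) y) hrpos' hkdist
    have := hsp (u (ψ k)) (Metric.mem_sphere.mpr rfl)
    rw [hfy, (hu (ψ k)).1] at this
    linarith
  -- radii and sphere bounds around critical points
  have hrexists : ∀ x ∈ Kstar, ∃ rx, 0 < rx ∧ (ball x rx ⊆ {z : X | f z < c}) ∧
      ∃ e, 0 < e ∧ ∀ y : X, dist y x = rx → cstar + e ≤ f y := by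
    rintro x ⟨hfx, hgx⟩
    have hxc : f x < c := by rw [hfx]; exact hcstarc
    obtain ⟨r₀, hr₀pos, hsl⟩ := hA2 x hxc hgx
    obtain ⟨ρ, hρpos, hρball⟩ := Metric.isOpen_iff.mp hsubopen x hxc
    refine ⟨min r₀ ρ / 2, by positivity, ?_, ?_⟩
    · exact Subset.trans (Metric.ball_subset_ball (by
        have := min_le_right r₀ ρ
        linarith)) hρball
    · obtain ⟨e, hepos, hsphere⟩ := hsl (min r₀ ρ / 2) (by positivity)
        (by have := min_le_left r₀ ρ; linarith)
      refine ⟨e, hepos, fun y hy => ?_⟩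
      have := hsphere y (Metric.mem_sphere.mpr hy)
      rw [hfx] at this
      exact this
  choose! r hrpos hrball ex hexpos hsph using hrexists
  have hepsmin : ∃ em, 0 < em ∧ ∀ x ∈ Kstar, em ≤ ex x := by
    rcases Kstar.eq_empty_or_nonempty with hK | hK
    · exact ⟨1, one_pos, by simp [hK]⟩
    · have hfin : (ex '' Kstar).Finite := hKfin.image _
      have hne : (ex '' Kstar).Nonempty := hK.image _
      have hmem := hne.csInf_mem hfin
      obtain ⟨x₁, hx₁, hx₁eq⟩ := hmem
      refine ⟨sInf (ex '' Kstar), by rw [← hx₁eq]; exact hexpos x₁ hx₁, fun x hx => ?_⟩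
      exact csInf_le hfin.bddBelow ⟨x, hx, rfl⟩
  obtain ⟨em, hem, hemle⟩ := hepsmin
  -- uniform gradient lower bound on the strip away from Kstar
  have hgradbound : ∃ δ, 0 < δ ∧ δ ≤ (c - cstar)/2 ∧ ∃ α, 0 < α ∧ ∀ x : X,
      |f x - cstar| ≤ δ → (∀ y ∈ Kstar, r y ≤ dist x y) → α ≤ ‖gradient f x‖ := by
    have hkey : ∃ δ, 0 < δ ∧ ∃ α, 0 < α ∧ ∀ x : X,
        |f x - cstar| ≤ δ → (∀ y ∈ Kstar, r y ≤ dist x y) → α ≤ ‖gradient f x‖ := by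
      by_contra hno
      push_neg at hno
      have hseq : ∀ n : ℕ, ∃ x : X, |f x - cstar| ≤ 1/(n+1) ∧
          (∀ y ∈ Kstar, r y ≤ dist x y) ∧ ‖gradient f x‖ < 1/(n+1) := by
        intro n
        obtain ⟨x, hx1, hx2, hx3⟩ := hno (1/(n+1)) (by positivity) (1/(n+1)) (by positivity)
        exact ⟨x, hx1, hx2, hx3⟩
      choose u hu1 hu2 hu3 using hseq
      have hdecay : Tendsto (fun n : ℕ => 1/((n:ℝ)+1)) atTop (𝓝 0) :=
        tendsto_one_div_add_atTop_nhds_zero_nat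
      have htf : Tendsto (fun m => f (u m)) atTop (𝓝 cstar) := by
        rw [tendsto_iff_dist_tendsto_zero]
        exact squeeze_zero (fun n => dist_nonneg)
          (fun n => by rw [Real.dist_eq]; exact hu1 n) hdecay
      have htg : Tendsto (fun m => gradient f (u m)) atTop (𝓝 (0:X)) := by
        rw [tendsto_zero_iff_norm_tendsto_zero]
        exact squeeze_zero (fun n => norm_nonneg _) (fun n => (hu3 n).le) hdecay
      obtain ⟨ψ, y, hψ, hconv⟩ := h3 cstar hcstar0 hcstarc u htf htg
      have hfy : f y = cstar :=
        tendsto_nhds_unique ((hfc.tendsto y).comp hconv) (htf.comp hψ.tendsto_atTop)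
      have hgy : gradient f y = 0 :=
        tendsto_nhds_unique ((hgradc.tendsto y).comp hconv) (htg.comp hψ.tendsto_atTop)
      have hyK : y ∈ Kstar := ⟨hfy, hgy⟩
      have hdist0 : Tendsto (fun k => dist (u (ψ k)) y) atTop (𝓝 0) :=
        tendsto_iff_dist_tendsto_zero.mp hconv
      have : r y ≤ 0 := ge_of_tendsto hdist0
        (Eventually.of_forall fun k => hu2 (ψ k) y hyK)
      linarith [hrpos y hyK]
    obtain ⟨δ, hδpos, α, hαpos, hbd⟩ := hkey
    refine ⟨min δ ((c - cstar)/2), lt_min hδpos (by linarith), min_le_right _ _,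
      α, hαpos, fun x hx1 hx2 => ?_⟩
    exact hbd x (le_trans hx1 (min_le_left _ _)) hx2
  obtain ⟨δ, hδpos, hδc, α, hαpos, hgb⟩ := hgradbound
  -- constants
  set β : ℝ := α^2/(2*(1+α)) with hβdef
  have hβpos : 0 < β := by positivity
  set κ : ℝ := min (δ/2) (em/2) with hκdef
  have hκpos : 0 < κ := lt_min (by linarith) (by linarith)
  have hκδ : κ ≤ δ := le_trans (min_le_left _ _) (by linarith)
  set b : ℝ := cstar + κ with hbdef
  have hbc : b < c := by
    have : κ ≤ δ/2 := min_le_left _ _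
    simp only [hbdef]
    linarith
  have hκe : ∀ x ∈ Kstar, κ < ex x := fun x hx =>
    lt_of_le_of_lt (min_le_right _ _) (by linarith [hemle x hx])
  -- members of E avoid the balls around Kstar
  have havoid : ∀ g, Good g → Φ g ≤ b → ∀ x ∈ Kstar, ∀ s : ↥(Icc (0:ℝ) 1),
      r x < dist (g s) x := by
    intro g hg hΦg x hx
    have hfval : ∀ s : ↥(Icc (0:ℝ) 1), f (g s) ≤ b := fun s => le_trans (hle_Φ g s) hΦg
    have hApre : IsPreconnected (ext g '' Icc 0 1) :=
      isPreconnected_Icc.image _ (hext_cont g).continuousOn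
    have hsub : ext g '' Icc 0 1 ⊆ {z : X | dist z x < r x} ∪ {z : X | r x < dist z x} := by
      rintro z ⟨s, hs, rfl⟩
      rcases lt_trichotomy (dist (ext g s) x) (r x) with hd | hd | hd
      · exact Or.inl hd
      · exfalso
        have h1 := hsph x hx (ext g s) hd
        have h2 : f (ext g s) ≤ b := by rw [hext_mem g s hs]; exact hfval _
        have := hκe x hx
        simp only [hbdef] at h2
        linarith
      · exact Or.inr hd
    rcases hApre.subset_or_subset (isOpen_lt (continuous_id.dist continuous_const)
        continuous_const) (isOpen_lt continuous_const (continuous_id.dist continuous_const))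
        (by
          rw [Set.disjoint_left]
          rintro z hz1 hz2
          simp only [mem_setOf_eq] at hz1 hz2
          linarith) hsub with hL | hR
    · exfalso
      apply hg.2.2
      -- the loop lies in the ball, which is inside S, so it is contractible
      have hball_sub : ball x (r x) ⊆ S := by
        have hg0mem : ext g 0 ∈ ball x (r x) := by
          have := hL ⟨0, ⟨le_refl 0, h01⟩, rfl⟩
          simpa [Metric.mem_ball] using this
        have hg0S : ext g 0 ∈ S := by
          rw [hext_mem g 0 ⟨le_refl 0, h01⟩]; exact hg.1 _
        have := (convex_ball x (r x)).isPreconnected.subset_connectedComponentIn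
          hg0mem (hrball x hx)
        rw [← connectedComponentIn_eq hg0S] at this
        exact this
      apply contract_in_convex (convex_ball x (r x)) hball_sub
        ((hext_cont g).continuousOn)
        (fun s hs => by have := hL ⟨s, hs, rfl⟩; simpa [Metric.mem_ball] using this)
        (Metric.mem_ball_self (hrpos x hx))
        (by
          rw [hext_mem g 0 ⟨le_refl 0, h01⟩, hext_mem g 1 ⟨h01, le_refl 1⟩]
          exact hg.2.1)
    · intro s
      have := hR ⟨↑s, s.2, rfl⟩
      rw [hext_coe g s] at this
      exact this
  -- E is closed, hence a complete space
  have hEclosed : IsClosed {g : C(↥(Icc (0:ℝ) 1), X) | Good g ∧ Φ g ≤ b} := by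
    apply IsSeqClosed.isClosed
    intro gn g hgn hconv
    have hd0 : Tendsto (fun n => dist (gn n) g) atTop (𝓝 0) :=
      tendsto_iff_dist_tendsto_zero.mp hconv
    have hpt : ∀ s, Tendsto (fun n => gn n s) atTop (𝓝 (g s)) := by
      intro s
      rw [tendsto_iff_dist_tendsto_zero]
      exact squeeze_zero (fun n => dist_nonneg)
        (fun n => ContinuousMap.dist_apply_le_dist s) hd0
    have hfs : ∀ s, f (g s) ≤ b := by
      intro s
      refine le_of_tendsto ((hfc.tendsto _).comp (hpt s)) ?_
      exact Eventually.of_forall fun n => le_trans (hle_Φ (gn n) s) (hgn n).2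
    have hgS : ∀ s, g s ∈ S := by
      intro s
      refine hclos _ (mem_closure_of_tendsto (hpt s)
        (Eventually.of_forall fun n => (hgn n).1.1 s)) ?_
      exact lt_of_le_of_lt (hfs s) hbc
    have hgloop : g zer = g one := by
      refine tendsto_nhds_unique (hpt zer) ?_
      exact (hpt one).congr fun n => ((hgn n).1.2.1).symm
    refine ⟨⟨hgS, hgloop, ?_⟩, ciSup_le hfs⟩
    -- NC is preserved under uniform limits
    intro hcontr
    have hK : IsCompact (ext g '' Icc 0 1) := isCompact_Icc.image (hext_cont g)
    have hKS : ext g '' Icc 0 1 ⊆ S := by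
      rintro z ⟨s, hs, rfl⟩
      rw [hext_mem g s hs]
      exact hgS _
    obtain ⟨ρ, hρpos, hρ⟩ := hK.exists_thickening_subset_open hSopen hKS
    obtain ⟨n, hn⟩ := (Metric.tendsto_atTop.mp hconv ρ hρpos).imp fun n hn => hn n le_rfl
    apply (hgn n).1.2.2
    refine transfer_contract (γ' := ext g)
      (fun l s => (1 - l) • ext (gn n) s + l • ext g s) ?_ ?_ ?_ ?_ ?_ hcontr
    · apply ContinuousOn.add
      · exact ((continuous_const.sub continuous_fst).smul
          ((hext_cont (gn n)).comp continuous_snd)).continuousOn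
      · exact (continuous_fst.smul ((hext_cont g).comp continuous_snd)).continuousOn
    · rintro l ⟨hl0, hl1⟩ s hs
      apply hρ
      rw [Metric.mem_thickening_iff]
      refine ⟨ext g s, ⟨s, hs, rfl⟩, ?_⟩
      have heq : (1 - l) • ext (gn n) s + l • ext g s - ext g s
          = (1 - l) • (ext (gn n) s - ext g s) := by
        module
      rw [dist_eq_norm, heq, norm_smul]
      have h2 : ‖ext (gn n) s - ext g s‖ ≤ dist (gn n) g := by
        rw [hext_mem _ s hs, hext_mem _ s hs, ← dist_eq_norm]
        exact ContinuousMap.dist_apply_le_dist _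
      have h3 : |1 - l| ≤ 1 := by rw [abs_le]; constructor <;> linarith
      calc |1 - l| * ‖ext (gn n) s - ext g s‖ ≤ 1 * dist (gn n) g := by
            apply mul_le_mul h3 h2 (norm_nonneg _) zero_le_one
        _ < ρ := by rw [one_mul]; exact hn
    · intro s hs; simp
    · intro s hs; simp
    · intro l hl
      have e1 : ext (gn n) 0 = ext (gn n) 1 := by
        rw [hext_mem _ 0 ⟨le_refl 0, h01⟩, hext_mem _ 1 ⟨h01, le_refl 1⟩]
        exact (hgn n).1.2.1
      have e2 : ext g 0 = ext g 1 := by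
        rw [hext_mem _ 0 ⟨le_refl 0, h01⟩, hext_mem _ 1 ⟨h01, le_refl 1⟩]
        exact hgloop
      simp only [e1, e2]
  have hEne : ∃ g : C(↥(Icc (0:ℝ) 1), X), Good g ∧ Φ g ≤ b := by
    obtain ⟨y, ⟨g, hg, rfl⟩, hy⟩ := Real.lt_sInf_add_pos hΓne hκpos
    exact ⟨g, hg, hy.le⟩
  haveI : Nonempty ↥{g : C(↥(Icc (0:ℝ) 1), X) | Good g ∧ Φ g ≤ b} := by
    obtain ⟨g, hg⟩ := hEne; exact ⟨⟨g, hg⟩⟩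
  haveI := hEclosed.completeSpace_coe
  -- Ekeland's principle
  have heke := ekeland_aux (E := ↥{g : C(↥(Icc (0:ℝ) 1), X) | Good g ∧ Φ g ≤ b})
    (fun e => Φ e.1) (L := 0) (fun e => hΦ_ge0 e.1) (by
      intro u v hu Lv hL
      have hptv : Tendsto (fun n => (u n).1) atTop (𝓝 v.1) :=
        (continuous_subtype_val.tendsto v).comp hu
      have hd0 : Tendsto (fun n => dist (u n).1 v.1) atTop (𝓝 0) :=
        tendsto_iff_dist_tendsto_zero.mp hptv
      refine ciSup_le fun s => ?_
      have hpt : Tendsto (fun n => ((u n).1 : C(↥(Icc (0:ℝ) 1), X)) s) atTop (𝓝 (v.1 s)) := by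
        rw [tendsto_iff_dist_tendsto_zero]
        exact squeeze_zero (fun n => dist_nonneg)
          (fun n => ContinuousMap.dist_apply_le_dist s) hd0
      exact le_of_tendsto_of_tendsto' ((hfc.tendsto _).comp hpt) hL
        fun n => hle_Φ (u n).1 s) (lam := β/2) (by positivity)
  obtain ⟨vE, hvE⟩ := heke
  set g : C(↥(Icc (0:ℝ) 1), X) := vE.1 with hgdef
  have hGood : Good g := vE.2.1
  have hΦgb : Φ g ≤ b := vE.2.2
  set q : ℝ → X := ext g with hqdef
  have hq_cont : Continuous q := hext_cont g
  have hqS : ∀ s ∈ Icc (0:ℝ) 1, q s ∈ S := fun s hs => by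
    rw [hqdef, hext_mem g s hs]; exact hGood.1 _
  have hq_le : ∀ s ∈ Icc (0:ℝ) 1, f (q s) ≤ b := fun s hs => by
    rw [hqdef, hext_mem g s hs]; exact le_trans (hle_Φ g _) hΦgb
  have hq_le' : ∀ s : ↥(Icc (0:ℝ) 1), f (q ↑s) ≤ Φ g := fun s => by
    rw [hqdef, hext_coe g s]; exact hle_Φ g s
  have hq_lt_c : ∀ s ∈ Icc (0:ℝ) 1, f (q s) < c := fun s hs => hSsub (hqS s hs)
  have hq01 : q 0 = q 1 := by
    rw [hqdef, hext_mem g 0 ⟨le_refl 0, h01⟩, hext_mem g 1 ⟨h01, le_refl 1⟩]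
    exact hGood.2.1
  set phi : ℝ → ℝ := fun s => max 0 (min 1 ((f (q s) - (cstar - δ)) * (2/δ))) with hphidef
  set w : ℝ → X := fun s => (1 + ‖gradient f (q s)‖)⁻¹ • gradient f (q s) with hwdef
  have hphi_cont : Continuous phi := by
    apply continuous_const.max
    apply continuous_const.min
    exact ((hfc.comp hq_cont).sub continuous_const).mul continuous_const
  have hw_cont : Continuous w := by
    apply Continuous.smul
    · exact (continuous_const.add (hgradc.comp hq_cont).norm).inv₀ (fun s => (by positivity : (0:ℝ) < 1 + ‖gradient f (q s)‖).ne')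
    · exact hgradc.comp hq_cont
  have hphi0 : ∀ s, 0 ≤ phi s := fun s => le_max_left _ _
  have hphi1 : ∀ s, phi s ≤ 1 := fun s => max_le (by norm_num) (min_le_left _ _)
  have hphi_pos : ∀ s, 0 < phi s → cstar - δ < f (q s) := by
    intro s hs
    by_contra hle
    push_neg at hle
    have hph0 : phi s = 0 := by
      have harg : (f (q s) - (cstar - δ)) * (2/δ) ≤ 0 :=
        mul_nonpos_of_nonpos_of_nonneg (by linarith) (by positivity)
      rw [hphidef]
      simp only
      rw [max_eq_left (le_trans (min_le_right _ _) harg)]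
    rw [hph0] at hs
    exact lt_irrefl _ hs
  have hphi_one : ∀ s, cstar - δ/2 ≤ f (q s) → phi s = 1 := by
    intro s hs
    have harg : (1:ℝ) ≤ (f (q s) - (cstar - δ)) * (2/δ) := by
      have h2 : δ/2 ≤ f (q s) - (cstar - δ) := by linarith
      calc (1:ℝ) = (δ/2) * (2/δ) := by field_simp
        _ ≤ (f (q s) - (cstar - δ)) * (2/δ) :=
            mul_le_mul_of_nonneg_right h2 (by positivity)
    rw [hphidef]
    simp only
    rw [min_eq_left harg, max_eq_right zero_le_one]
  have hw_norm : ∀ s, ‖w s‖ ≤ 1 := by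
    intro s
    rw [hwdef]
    simp only
    rw [norm_smul, norm_inv, Real.norm_of_nonneg (by positivity)]
    rw [inv_mul_le_iff₀ (by positivity), mul_one]
    linarith [norm_nonneg (gradient f (q s))]
  have hinner2β : ∀ s, α ≤ ‖gradient f (q s)‖ →
      2*β ≤ (inner ℝ (gradient f (q s)) (w s) : ℝ) := by
    intro s hα
    rw [hwdef]
    simp only
    rw [real_inner_smul_right, real_inner_self_eq_norm_sq]
    set G := ‖gradient f (q s)‖ with hGdef
    have hG0 : (0:ℝ) ≤ G := norm_nonneg _
    have key : α^2/(1+α) ≤ G^2/(1+G) := by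
      rw [div_le_div_iff₀ (by positivity) (by positivity)]
      nlinarith [mul_nonneg (sub_nonneg.mpr hα) (by positivity : (0:ℝ) ≤ G + α),
        mul_nonneg (mul_nonneg hαpos.le hG0) (sub_nonneg.mpr hα)]
    have h2β : 2*β = α^2/(1+α) := by
      rw [hβdef]; field_simp
    rw [h2β]
    calc α^2/(1+α) ≤ G^2/(1+G) := key
      _ = (1+G)⁻¹ * G^2 := by rw [div_eq_mul_inv, mul_comm]
  have hgrad_lb : ∀ s ∈ Icc (0:ℝ) 1, 0 < phi s → α ≤ ‖gradient f (q s)‖ := by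
    intro s hs hφ
    apply hgb (q s)
    · rw [abs_le]
      constructor
      · linarith [hphi_pos s hφ]
      · have := hq_le s hs
        simp only [hbdef] at this
        linarith [hκδ]
    · intro y hy
      have := havoid g hGood hΦgb y hy ⟨s, hs⟩
      rw [hqdef, hext_mem g s hs]
      exact this.le
  -- choice of the time step by compactness
  have htube : ∃ t, 0 < t ∧ t ≤ 1 ∧ ∀ s ∈ Icc (0:ℝ) 1, ∀ τ ∈ Icc (0:ℝ) t,
      ‖gradient f (q s - (τ * phi s) • w s) - gradient f (q s)‖ ≤ β := by
    by_contra hno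
    push_neg at hno
    have hQcont : Continuous (fun p : ℝ × ℝ =>
        ‖gradient f (q p.1 - (p.2 * phi p.1) • w p.1) - gradient f (q p.1)‖) := by
      apply Continuous.norm
      apply Continuous.sub
      · apply hgradc.comp
        apply Continuous.sub (hq_cont.comp continuous_fst)
        apply Continuous.smul
        · exact continuous_snd.mul (hphi_cont.comp continuous_fst)
        · exact hw_cont.comp continuous_fst
      · exact hgradc.comp (hq_cont.comp continuous_fst)
    have hseq : ∀ n : ℕ, ∃ s ∈ Icc (0:ℝ) 1, ∃ τ ∈ Icc (0:ℝ) (1/(n+1)),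
        β < ‖gradient f (q s - (τ * phi s) • w s) - gradient f (q s)‖ := by
      intro n
      obtain ⟨s, hs, τ, hτ, hQ⟩ := hno (1/(n+1)) (by positivity) (by
        rw [div_le_one (by positivity)]
        linarith [Nat.cast_nonneg (α := ℝ) n])
      exact ⟨s, hs, τ, hτ, hQ⟩
    choose sn hsn τn hτn hQn using hseq
    obtain ⟨sl, hsl, ψ, hψmono, hsconv⟩ := isCompact_Icc.tendsto_subseq hsn
    have hdecay : Tendsto (fun n : ℕ => 1/((n:ℝ)+1)) atTop (𝓝 0) :=
      tendsto_one_div_add_atTop_nhds_zero_nat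
    have hτconv : Tendsto (fun k => τn (ψ k)) atTop (𝓝 0) := by
      apply squeeze_zero (fun k => (hτn (ψ k)).1)
        (fun k => le_trans (hτn (ψ k)).2 ?_) hdecay
      apply one_div_le_one_div_of_le (by positivity)
      have hk : k ≤ ψ k := hψmono.le_apply
      have : (k:ℝ) ≤ (ψ k : ℝ) := Nat.cast_le.mpr hk
      push_cast
      linarith
    have hp : Tendsto (fun k => (sn (ψ k), τn (ψ k))) atTop (𝓝 (sl, 0)) :=
      hsconv.prodMk_nhds hτconv
    have hQtend := (hQcont.tendsto (sl, 0)).comp hp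
    have hQ0 : ‖gradient f (q sl - ((0:ℝ) * phi sl) • w sl) - gradient f (q sl)‖ = 0 := by
      simp
    have hβ0 : β ≤ ‖gradient f (q sl - ((0:ℝ) * phi sl) • w sl) - gradient f (q sl)‖ :=
      ge_of_tendsto hQtend (Eventually.of_forall fun k => (hQn (ψ k)).le)
    rw [hQ0] at hβ0
    linarith
  obtain ⟨t, htpos, ht1, htube⟩ := htube
  -- the derivative along the push
  have hderiv : ∀ (s τ₀ : ℝ), HasDerivAt (fun τ : ℝ => f (q s - (τ * phi s) • w s))
      (-(phi s * (inner ℝ (gradient f (q s - (τ₀ * phi s) • w s)) (w s) : ℝ))) τ₀ := by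
    intro s τ₀
    have h1 := hcurve (q s) (phi s • w s) τ₀
    simp only [smul_smul] at h1
    rw [real_inner_smul_right] at h1
    exact h1
  -- the descent estimate
  have hdesc : ∀ s ∈ Icc (0:ℝ) 1, ∀ τ ∈ Icc (0:ℝ) t,
      f (q s - (τ * phi s) • w s) ≤ f (q s) - τ * phi s * β := by
    intro s hs τ hτ
    rcases eq_or_lt_of_le hτ.1 with h0 | hτpos
    · rw [← h0]; simp
    rcases eq_or_lt_of_le (hphi0 s) with hφ0 | hφpos
    · rw [← hφ0]; simp
    have hbound : ∀ ζ ∈ Ioo (0:ℝ) τ,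
        β ≤ (inner ℝ (gradient f (q s - (ζ * phi s) • w s)) (w s) : ℝ) := by
      intro ζ hζ
      have h2β := hinner2β s (hgrad_lb s hs hφpos)
      have htb := htube s hs ζ ⟨hζ.1.le, le_trans hζ.2.le hτ.2⟩
      have hsplit : (inner ℝ (gradient f (q s - (ζ * phi s) • w s)) (w s) : ℝ)
          = (inner ℝ (gradient f (q s)) (w s) : ℝ)
            + (inner ℝ (gradient f (q s - (ζ * phi s) • w s) - gradient f (q s)) (w s) : ℝ) := by
        rw [inner_sub_left]
        ring
      have habs : |(inner ℝ (gradient f (q s - (ζ * phi s) • w s) - gradient f (q s))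
          (w s) : ℝ)| ≤ β := by
        calc |(inner ℝ (gradient f (q s - (ζ * phi s) • w s) - gradient f (q s)) (w s) : ℝ)|
            ≤ ‖gradient f (q s - (ζ * phi s) • w s) - gradient f (q s)‖ * ‖w s‖ :=
              abs_real_inner_le_norm _ _
          _ ≤ β * 1 := mul_le_mul htb (hw_norm s) (norm_nonneg _) hβpos.le
          _ = β := mul_one β
      rw [hsplit]
      have := abs_le.mp habs
      linarith
    obtain ⟨ζ, hζ, hslope⟩ := exists_hasDerivAt_eq_slope
      (fun τ => f (q s - (τ * phi s) • w s))
      (fun τ₀ => -(phi s * (inner ℝ (gradient f (q s - (τ₀ * phi s) • w s)) (w s) : ℝ)))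
      hτpos
      (Continuous.continuousOn (by
        apply hfc.comp
        apply Continuous.sub continuous_const
        apply Continuous.smul
        · exact continuous_id.mul continuous_const
        · exact continuous_const))
      (fun ζ _ => hderiv s ζ)
    have hζβ := hbound ζ hζ
    have h0v : f (q s - ((0:ℝ) * phi s) • w s) = f (q s) := by simp
    rw [h0v, sub_zero] at hslope
    have hsl2 : (f (q s - (τ * phi s) • w s) - f (q s)) / τ ≤ -(phi s * β) := by
      rw [← hslope]
      have : phi s * β ≤ phi s * (inner ℝ (gradient f (q s - (ζ * phi s) • w s)) (w s) : ℝ) :=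
        mul_le_mul_of_nonneg_left hζβ (hphi0 s)
      linarith
    rw [div_le_iff₀ hτpos] at hsl2
    nlinarith
  -- all intermediate points stay in S
  have hmemS : ∀ s ∈ Icc (0:ℝ) 1, ∀ τ ∈ Icc (0:ℝ) t, q s - (τ * phi s) • w s ∈ S := by
    intro s hs τ hτ
    have himg : (fun τ' : ℝ => q s - (τ' * phi s) • w s) '' Icc 0 τ ⊆ {z : X | f z < c} := by
      rintro z ⟨τ', hτ', rfl⟩
      have hd := hdesc s hs τ' ⟨hτ'.1, le_trans hτ'.2 hτ.2⟩
      have hnn : 0 ≤ τ' * phi s * β := by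
        apply mul_nonneg (mul_nonneg hτ'.1 (hphi0 s)) hβpos.le
      exact lt_of_le_of_lt (by linarith) (hq_lt_c s hs)
    have hpre : IsPreconnected ((fun τ' : ℝ => q s - (τ' * phi s) • w s) '' Icc 0 τ) := by
      apply isPreconnected_Icc.image
      apply Continuous.continuousOn
      apply Continuous.sub continuous_const
      apply Continuous.smul
      · exact continuous_id.mul continuous_const
      · exact continuous_const
    have h0mem : q s ∈ (fun τ' : ℝ => q s - (τ' * phi s) • w s) '' Icc 0 τ :=
      ⟨0, ⟨le_refl 0, hτ.1⟩, by simp⟩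
    have hsub2 := hpre.subset_connectedComponentIn h0mem himg
    rw [← connectedComponentIn_eq (hqS s hs)] at hsub2
    exact hsub2 ⟨τ, ⟨hτ.1, le_refl τ⟩, rfl⟩
  -- the perturbed loop
  have hηcont : Continuous (fun s : ↥(Icc (0:ℝ) 1) => q ↑s - (t * phi ↑s) • w ↑s) := by
    apply Continuous.sub (hq_cont.comp continuous_subtype_val)
    apply Continuous.smul
    · exact continuous_const.mul (hphi_cont.comp continuous_subtype_val)
    · exact hw_cont.comp continuous_subtype_val
  set η : C(↥(Icc (0:ℝ) 1), X) := ⟨fun s => q ↑s - (t * phi ↑s) • w ↑s, hηcont⟩ with hηdef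
  have hphi01 : phi 0 = phi 1 := by simp only [hphidef]; rw [hq01]
  have hw01 : w 0 = w 1 := by simp only [hwdef]; rw [hq01]
  have hη_le : ∀ s : ↥(Icc (0:ℝ) 1), f (η s) ≤ f (q ↑s) - t * phi ↑s * β := fun s =>
    hdesc ↑s s.2 t ⟨htpos.le, le_refl t⟩
  have hη_le' : ∀ s : ↥(Icc (0:ℝ) 1), f (η s) ≤ f (q ↑s) := by
    intro s
    have h1 := hη_le s
    have h2 : 0 ≤ t * phi ↑s * β :=
      mul_nonneg (mul_nonneg htpos.le (hphi0 _)) hβpos.le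
    linarith
  have hext_η : ∀ s (hs : s ∈ Icc (0:ℝ) 1), ext η s = q s - (t * phi s) • w s := by
    intro s hs
    rw [hext_mem η s hs]
    rfl
  have hGoodη : Good η := by
    refine ⟨fun s => hmemS ↑s s.2 t ⟨htpos.le, le_refl t⟩, ?_, ?_⟩
    · show q ↑zer - (t * phi ↑zer) • w ↑zer = q ↑one - (t * phi ↑one) • w ↑one
      have hz : (↑zer : ℝ) = 0 := rfl
      have ho : (↑one : ℝ) = 1 := rfl
      rw [hz, ho, hq01, hphi01, hw01]
    · intro hcontr
      apply hGood.2.2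
      refine transfer_contract (γ' := ext η)
        (fun l s => q s - ((l * t) * phi s) • w s) ?_ ?_ ?_ ?_ ?_ hcontr
      · apply ContinuousOn.sub
        · exact (hq_cont.comp continuous_snd).continuousOn
        · apply ContinuousOn.smul
          · exact ((continuous_fst.mul continuous_const).mul
              (hphi_cont.comp continuous_snd)).continuousOn
          · exact (hw_cont.comp continuous_snd).continuousOn
      · rintro l ⟨hl0, hl1⟩ s hs
        refine hmemS s hs (l*t) ⟨mul_nonneg hl0 htpos.le, ?_⟩
        nlinarith
      · intro s hs; simp [hqdef]
      · intro s hs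
        rw [hext_η s hs]
        norm_num
      · intro l hl
        rw [hq01, hphi01, hw01]
  have hΦη : Φ η ≤ b := ciSup_le fun s => le_trans (hη_le' s) (hq_le ↑s s.2)
  have hdistη : dist η g ≤ t := by
    rw [ContinuousMap.dist_le htpos.le]
    intro s
    rw [dist_eq_norm]
    have heq2 : η s - g s = -((t * phi ↑s) • w ↑s) := by
      show q ↑s - (t * phi ↑s) • w ↑s - g s = _
      rw [← hext_coe g s, ← hqdef]
      abel
    rw [heq2, norm_neg, norm_smul]
    have h1 : |t * phi ↑s| ≤ t := by
      rw [abs_of_nonneg (mul_nonneg htpos.le (hphi0 _))]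
      nlinarith [hphi1 (↑s : ℝ), hphi0 (↑s : ℝ)]
    calc |t * phi ↑s| * ‖w ↑s‖ ≤ t * 1 :=
        mul_le_mul h1 (hw_norm _) (norm_nonneg _) htpos.le
      _ = t := mul_one t
  -- Ekeland inequality for the perturbed loop
  have hekeη := hvE ⟨η, hGoodη, hΦη⟩
  have hdist_eq : dist (⟨η, ⟨hGoodη, hΦη⟩⟩ : ↥{g : C(↥(Icc (0:ℝ) 1), X) | Good g ∧ Φ g ≤ b}) vE
      = dist η g := rfl
  rw [hdist_eq] at hekeη
  have hcases : Φ η ≤ max (cstar - δ/2) (Φ g - t * β) := by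
    apply ciSup_le
    intro s
    rcases le_or_gt (cstar - δ/2) (f (q ↑s)) with hcase | hcase
    · have hp1 : phi ↑s = 1 := hphi_one ↑s hcase
      have h2 := hη_le s
      rw [hp1] at h2
      refine le_trans ?_ (le_max_right _ _)
      have h3 := hq_le' s
      linarith
    · refine le_trans ?_ (le_max_left _ _)
      linarith [hη_le' s, hq_le' s]
  have hηcstar : cstar ≤ Φ η := hcstar_le η hGoodη
  have h5 : (β/2) * dist η g ≤ (β/2) * t :=
    mul_le_mul_of_nonneg_left hdistη (by positivity)
  rcases le_total (cstar - δ/2) (Φ g - t * β) with hmx | hmx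
  · rw [max_eq_right hmx] at hcases
    nlinarith
  · rw [max_eq_left hmx] at hcases
    linarith
end
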